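/- arXiv:2605.27007 — 6 statements merged into one kernel-verified Lean document; each statement's English description precedes it below -/
import Mathlib

section
/- A polytope P ⊆ ℝ^d is locally anti-blocking if and only if for every vertex v of P and every subset I ⊆ {1,...,d}, the point π_I(v) obtained from v by setting all coordinates indexed by I to zero lies in P. -/
open Set

/-- A polytope: the convex hull of a finite set of points. -/
def IsPolytope {ι : Type*} (P : Set (ι → ℝ)) : Prop :=
  ∃ V : Finset (ι → ℝ), P = convexHull ℝ (V : Set (ι → ℝ))

/-- A set `Q` (inside the nonnegative orthant) is anti-blocking if it is closed under
coordinatewise decrease within the nonnegative orthant. -/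
def AntiBlocking {ι : Type*} (Q : Set (ι → ℝ)) : Prop :=
  ∀ x ∈ Q, ∀ y : ι → ℝ, (∀ i, 0 ≤ y i ∧ y i ≤ x i) → y ∈ Q

/-- A polytope `P` is locally anti-blocking if for every sign vector `σ ∈ {-1,1}^d`,
the restriction of `σP` to the nonnegative orthant is anti-blocking. -/
def LocallyAntiBlocking {ι : Type*} (P : Set (ι → ℝ)) : Prop :=
  ∀ σ : ι → ℝ, (∀ i, σ i = 1 ∨ σ i = -1) →
    AntiBlocking (((fun x i => σ i * x i) '' P) ∩ {x : ι → ℝ | ∀ i, 0 ≤ x i})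

lemma proj_mem_aux {d : ℕ} (P : Set (Fin d → ℝ)) (hP : IsCompact P) (hconv : Convex ℝ P)
    (hE : (Set.extremePoints ℝ P).Finite)
    (h : ∀ v ∈ Set.extremePoints ℝ P, ∀ I : Finset (Fin d),
      (fun i => if i ∈ I then 0 else v i) ∈ P)
    (I : Finset (Fin d)) (x : Fin d → ℝ) (hx : x ∈ P) :
    (fun i => if i ∈ I then 0 else x i) ∈ P := by
  have hKM : convexHull ℝ (Set.extremePoints ℝ P) = P := by
    conv_rhs => rw [← closure_convexHull_extremePoints hP hconv]
    exact (hE.isClosed_convexHull ℝ).closure_eq.symm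
  have hx' : x ∈ convexHull ℝ (Set.extremePoints ℝ P) := by rw [hKM]; exact hx
  let L : (Fin d → ℝ) →ₗ[ℝ] (Fin d → ℝ) :=
    { toFun := fun y i => if i ∈ I then 0 else y i
      map_add' := by intro a b; funext i; by_cases hi : i ∈ I <;> simp [hi]
      map_smul' := by intro c a; funext i; by_cases hi : i ∈ I <;> simp [hi] }
  have himg : L x ∈ L '' (convexHull ℝ (Set.extremePoints ℝ P)) := ⟨x, hx', rfl⟩
  rw [L.image_convexHull] at himg
  have : convexHull ℝ (L '' Set.extremePoints ℝ P) ⊆ P := by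
    apply convexHull_min _ hconv
    rintro _ ⟨v, hv, rfl⟩
    exact h v hv I
  exact this himg

lemma scale_mem_aux {d : ℕ} (P : Set (Fin d → ℝ)) (hconv : Convex ℝ P)
    (hproj : ∀ I : Finset (Fin d), ∀ x ∈ P, (fun i => if i ∈ I then 0 else x i) ∈ P)
    (t : Fin d → ℝ) (ht : ∀ i, 0 ≤ t i ∧ t i ≤ 1)
    (x : Fin d → ℝ) (hx : x ∈ P) :
    (fun i => t i * x i) ∈ P := by
  have key : ∀ s : Finset (Fin d), (fun i => if i ∈ s then t i * x i else x i) ∈ P := by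
    intro s
    induction s using Finset.induction_on with
    | empty => simpa using hx
    | @insert i s his ih =>
      set xs : Fin d → ℝ := fun j => if j ∈ s then t j * x j else x j with hxs
      have hp : (fun j => if j ∈ ({i} : Finset (Fin d)) then 0 else xs j) ∈ P :=
        hproj {i} xs ih
      have heq : (fun j => if j ∈ insert i s then t j * x j else x j)
          = t i • xs + (1 - t i) • (fun j => if j ∈ ({i} : Finset (Fin d)) then 0 else xs j) := by
        funext j
        simp only [Pi.add_apply, Pi.smul_apply, smul_eq_mul, Finset.mem_insert,
          Finset.mem_singleton, hxs]
        by_cases hji : j = i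
        · subst hji; simp [his]
        · by_cases hjs : j ∈ s <;> simp [hji, hjs] <;> ring
      rw [heq]
      exact hconv ih hp (ht i).1 (by linarith [(ht i).2]) (by ring)
  have := key Finset.univ
  simpa using this

/-- A polytope `P ⊆ ℝ^d` is locally anti-blocking iff for every vertex `v`
of `P` and every subset `I ⊆ {1,…,d}`, the point obtained from `v` by setting the
coordinates indexed by `I` to zero lies in `P`. -/
theorem locallyAntiBlocking_iff_vertex_projections {d : ℕ} (P : Set (Fin d → ℝ))
    (hP : IsPolytope P) :
    LocallyAntiBlocking P ↔
      ∀ v ∈ Set.extremePoints ℝ P, ∀ I : Finset (Fin d),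
        (fun i => if i ∈ I then 0 else v i) ∈ P := by
  obtain ⟨V, rfl⟩ := hP
  set P := convexHull ℝ (V : Set (Fin d → ℝ))
  have hconv : Convex ℝ P := convex_convexHull ℝ _
  have hcomp : IsCompact P := V.finite_toSet.isCompact_convexHull ℝ
  have hE : (Set.extremePoints ℝ P).Finite :=
    V.finite_toSet.subset extremePoints_convexHull_subset
  constructor
  · intro hLAB v hv I
    have hvP : v ∈ P := hv.1
    set σ : Fin d → ℝ := fun i => if 0 ≤ v i then 1 else -1 with hσdef
    have hσ : ∀ i, σ i = 1 ∨ σ i = -1 := by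
      intro i; by_cases h : 0 ≤ v i <;> simp [σ, h]
    have hσnn : ∀ i, 0 ≤ σ i * v i := by
      intro i
      by_cases h : 0 ≤ v i
      · simp [σ, h]
      · simp only [σ, if_neg h]; push_neg at h; nlinarith
    have hx : (fun i => σ i * v i) ∈ ((fun x i => σ i * x i) '' P) ∩ {x | ∀ i, 0 ≤ x i} :=
      ⟨⟨v, hvP, rfl⟩, hσnn⟩
    have hy := hLAB σ hσ _ hx (fun i => if i ∈ I then 0 else σ i * v i)
      (by
        intro i
        by_cases hi : i ∈ I <;> simp [hi, hσnn i])
    obtain ⟨⟨p, hpP, hpeq⟩, -⟩ := hy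
    have hσsq : ∀ i, σ i * σ i = 1 := by
      intro i; rcases hσ i with h | h <;> rw [h] <;> ring
    have : (fun i => if i ∈ I then 0 else v i) = p := by
      funext i
      have := congrFun hpeq i
      by_cases hi : i ∈ I
      · simp only [hi, if_pos] at this ⊢
        rcases hσ i with h | h <;> rw [h] at this <;> linarith
      · simp only [hi, if_neg, not_false_iff] at this ⊢
        have h2 : σ i * (σ i * p i) = σ i * (σ i * v i) := by rw [this]
        rw [← mul_assoc, ← mul_assoc, hσsq i, one_mul, one_mul] at h2
        exact h2.symm
    rw [this]; exact hpP
  · intro h σ hσ x hx y hy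
    obtain ⟨⟨p, hpP, hpeq⟩, hxnn⟩ := hx
    have hσsq : ∀ i, σ i * σ i = 1 := by
      intro i; rcases hσ i with hh | hh <;> rw [hh] <;> ring
    have hproj := proj_mem_aux P hcomp hconv hE h
    -- x i = σ i * p i, 0 ≤ y i ≤ σ i * p i
    have hxp : ∀ i, x i = σ i * p i := fun i => (congrFun hpeq i).symm
    set t : Fin d → ℝ := fun i => if p i = 0 then 0 else y i / (σ i * p i) with htdef
    have hbnd : ∀ i, 0 ≤ t i ∧ t i ≤ 1 := by
      intro i
      by_cases hpi : p i = 0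
      · simp [t, hpi]
      · have hpos : 0 < σ i * p i := by
          have h1 : 0 ≤ σ i * p i := by rw [← hxp i]; exact hxnn i
          rcases h1.lt_or_eq with h2 | h2
          · exact h2
          · exfalso; rcases hσ i with hh | hh <;> rw [hh] at h2 <;>
              [skip; skip] <;> apply hpi <;> nlinarith
        have hyi := hy i
        rw [hxp i] at hyi
        simp only [t, if_neg hpi]
        constructor
        · exact div_nonneg hyi.1 hpos.le
        · rw [div_le_one hpos]; exact hyi.2
    have htp : ∀ i, t i * p i = σ i * y i := by
      intro i
      by_cases hpi : p i = 0
      · have hyi := hy i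
        rw [hxp i, hpi, mul_zero] at hyi
        have : y i = 0 := le_antisymm hyi.2 hyi.1
        simp [t, hpi, this]
      · have hne : σ i * p i ≠ 0 := by
          intro hc; rcases hσ i with hh | hh <;> rw [hh] at hc <;> apply hpi <;> linarith
        simp only [t, if_neg hpi]
        field_simp
        rcases hσ i with hh | hh <;> rw [hh] <;> ring
    have hz : (fun i => t i * p i) ∈ P := scale_mem_aux P hconv hproj t hbnd p hpP
    refine ⟨⟨_, hz, ?_⟩, fun i => (hy i).1⟩
    funext i
    simp only
    rw [htp i, ← mul_assoc, hσsq i, one_mul]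
end

section
/- If P ⊆ ℝ^m and Q ⊆ ℝ^n are locally anti-blocking polytopes each containing the origin in its interior, then their free sum P ⊕ Q = conv((P × {0}) ∪ ({0} × Q)) ⊆ ℝ^{m+n} is locally anti-blocking. -/
open Set

/-- The free sum of `P ⊆ ℝ^m` and `Q ⊆ ℝ^n` (each containing the origin):
`conv((P × {0}) ∪ ({0} × Q)) ⊆ ℝ^{m+n}`. -/
def freeSum {m n : ℕ} (P : Set (Fin m → ℝ)) (Q : Set (Fin n → ℝ)) :
    Set (Fin (m + n) → ℝ) :=
  convexHull ℝ
    (((fun x => Fin.append x (0 : Fin n → ℝ)) '' P) ∪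
      ((fun y => Fin.append (0 : Fin m → ℝ) y) '' Q))

/-- Auxiliary: closure under coordinatewise squeezing toward 0. -/
def Squeezed {ι : Type*} (S : Set (ι → ℝ)) : Prop :=
  ∀ x ∈ S, ∀ z : ι → ℝ,
    (∀ i, (0 ≤ z i ∧ z i ≤ x i) ∨ (x i ≤ z i ∧ z i ≤ 0)) → z ∈ S

lemma lab_of_squeezed {ι : Type*} {S : Set (ι → ℝ)} (h : Squeezed S) :
    LocallyAntiBlocking S := by
  intro σ hσ x hx y hy
  obtain ⟨⟨w, hw, hwx⟩, -⟩ := hx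
  have hz : (fun i => σ i * y i) ∈ S := by
    refine h w hw _ fun i => ?_
    have hxi : x i = σ i * w i := by rw [← hwx]
    rcases hσ i with hs | hs <;> rcases hy i with ⟨h1, h2⟩ <;>
      rw [hxi, hs] at h2 <;> [left; right] <;> rw [hs] <;> constructor <;> linarith
  refine ⟨⟨_, hz, ?_⟩, fun i => (hy i).1⟩
  funext i
  rcases hσ i with hs | hs <;> simp [hs] <;> ring_nf <;> simp

lemma squeezed_of_lab {ι : Type*} {S : Set (ι → ℝ)} (h : LocallyAntiBlocking S) :
    Squeezed S := by
  classical
  intro x hx z hz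
  set σ : ι → ℝ := fun i => if 0 ≤ x i then 1 else -1 with hσdef
  have hσ : ∀ i, σ i = 1 ∨ σ i = -1 := fun i => by
    by_cases hi : 0 ≤ x i <;> simp [σ, hi]
  have hmem : (fun i => σ i * x i) ∈
      ((fun x i => σ i * x i) '' S) ∩ {x : ι → ℝ | ∀ i, 0 ≤ x i} := by
    refine ⟨⟨x, hx, rfl⟩, fun i => ?_⟩
    by_cases hi : 0 ≤ x i <;> simp [σ, hi] <;> linarith [not_le.mp (by assumption : ¬ 0 ≤ x i)]
  have hy : (fun i => σ i * z i) ∈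
      ((fun x i => σ i * x i) '' S) ∩ {x : ι → ℝ | ∀ i, 0 ≤ x i} := by
    refine h σ hσ _ hmem _ fun i => ?_
    by_cases hi : 0 ≤ x i
    · have hs : σ i = 1 := if_pos hi
      rcases hz i with ⟨h1, h2⟩ | ⟨h1, h2⟩ <;> rw [hs] <;> constructor <;> nlinarith
    · have hs : σ i = -1 := if_neg hi
      push_neg at hi
      rcases hz i with ⟨h1, h2⟩ | ⟨h1, h2⟩ <;> rw [hs] <;> constructor <;> nlinarith
  obtain ⟨⟨w, hw, hwz⟩, -⟩ := hy
  have hwz' : w = z := by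
    funext i
    have h2 : σ i * w i = σ i * z i := congrFun hwz i
    rcases hσ i with hs | hs <;> rw [hs] at h2 <;> linarith
  rwa [← hwz']

lemma appendLeft_linear {m n : ℕ} :
    IsLinearMap ℝ (fun x : Fin m → ℝ => Fin.append x (0 : Fin n → ℝ)) := by
  constructor <;> intro a b <;> funext j <;>
    refine Fin.addCases (fun i => ?_) (fun i => ?_) j <;>
    simp [Fin.append_left, Fin.append_right]

lemma appendRight_linear {m n : ℕ} :
    IsLinearMap ℝ (fun y : Fin n → ℝ => Fin.append (0 : Fin m → ℝ) y) := by
  constructor <;> intro a b <;> funext j <;>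
    refine Fin.addCases (fun i => ?_) (fun i => ?_) j <;>
    simp [Fin.append_left, Fin.append_right]

/-- The free sum of two locally anti-blocking polytopes, each containing
the origin in its interior, is locally anti-blocking. -/
theorem freeSum_locallyAntiBlocking {m n : ℕ}
    (P : Set (Fin m → ℝ)) (Q : Set (Fin n → ℝ))
    (hP : IsPolytope P) (hQ : IsPolytope Q)
    (hP0 : (0 : Fin m → ℝ) ∈ interior P) (hQ0 : (0 : Fin n → ℝ) ∈ interior Q)
    (hPlab : LocallyAntiBlocking P) (hQlab : LocallyAntiBlocking Q) :
    LocallyAntiBlocking (freeSum P Q) := by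
  classical
  have hPc : Convex ℝ P := by obtain ⟨V, rfl⟩ := hP; exact convex_convexHull ℝ _
  have hQc : Convex ℝ Q := by obtain ⟨V, rfl⟩ := hQ; exact convex_convexHull ℝ _
  have hP0' : (0 : Fin m → ℝ) ∈ P := interior_subset hP0
  have hQ0' : (0 : Fin n → ℝ) ∈ Q := interior_subset hQ0
  have hPs : Squeezed P := squeezed_of_lab hPlab
  have hQs : Squeezed Q := squeezed_of_lab hQlab
  set A : Set (Fin (m + n) → ℝ) := (fun x => Fin.append x (0 : Fin n → ℝ)) '' P with hA
  set B : Set (Fin (m + n) → ℝ) := (fun y => Fin.append (0 : Fin m → ℝ) y) '' Q with hB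
  have hAc : Convex ℝ A := hPc.is_linear_image appendLeft_linear
  have hBc : Convex ℝ B := hQc.is_linear_image appendRight_linear
  have hAne : A.Nonempty := ⟨_, ⟨0, hP0', rfl⟩⟩
  have hBne : B.Nonempty := ⟨_, ⟨0, hQ0', rfl⟩⟩
  have hkey : freeSum P Q = convexJoin ℝ A B := by
    rw [freeSum, convexHull_union hAne hBne, hAc.convexHull_eq, hBc.convexHull_eq]
  apply lab_of_squeezed
  intro x hx z hz
  rw [hkey] at hx ⊢
  rw [mem_convexJoin] at hx
  obtain ⟨u, ⟨p, hp, rfl⟩, v, ⟨q, hq, rfl⟩, a, b, ha, hb, hab, hsum⟩ := hx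
  have hsum' : a • Fin.append p (0 : Fin n → ℝ) +
      b • Fin.append (0 : Fin m → ℝ) q = x := hsum
  have hx1 : ∀ i : Fin m, x (Fin.castAdd n i) = a * p i := by
    intro i; rw [← hsum']; simp [Fin.append_left]
  have hx2 : ∀ i : Fin n, x (Fin.natAdd m i) = b * q i := by
    intro i; rw [← hsum']; simp [Fin.append_right]
  set p' : Fin m → ℝ := fun i => if a = 0 then 0 else z (Fin.castAdd n i) / a with hp'
  set q' : Fin n → ℝ := fun i => if b = 0 then 0 else z (Fin.natAdd m i) / b with hq'
  have hp'P : p' ∈ P := by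
    by_cases ha0 : a = 0
    · convert hP0' using 1; funext i; simp [hp', ha0]
    · have hapos : 0 < a := lt_of_le_of_ne ha (Ne.symm ha0)
      refine hPs p hp p' fun i => ?_
      have hzi := hz (Fin.castAdd n i)
      rw [hx1 i] at hzi
      simp only [hp', if_neg ha0]
      rcases hzi with ⟨h1, h2⟩ | ⟨h1, h2⟩
      · left
        exact ⟨div_nonneg h1 ha, (div_le_iff₀ hapos).mpr (by linarith)⟩
      · right
        exact ⟨(le_div_iff₀ hapos).mpr (by linarith), div_nonpos_of_nonpos_of_nonneg h2 ha⟩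
  have hq'Q : q' ∈ Q := by
    by_cases hb0 : b = 0
    · convert hQ0' using 1; funext i; simp [hq', hb0]
    · have hbpos : 0 < b := lt_of_le_of_ne hb (Ne.symm hb0)
      refine hQs q hq q' fun i => ?_
      have hzi := hz (Fin.natAdd m i)
      rw [hx2 i] at hzi
      simp only [hq', if_neg hb0]
      rcases hzi with ⟨h1, h2⟩ | ⟨h1, h2⟩
      · left
        exact ⟨div_nonneg h1 hb, (div_le_iff₀ hbpos).mpr (by linarith)⟩
      · right
        exact ⟨(le_div_iff₀ hbpos).mpr (by linarith), div_nonpos_of_nonpos_of_nonneg h2 hb⟩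
  rw [mem_convexJoin]
  refine ⟨_, ⟨p', hp'P, rfl⟩, _, ⟨q', hq'Q, rfl⟩, a, b, ha, hb, hab, ?_⟩
  funext j
  refine Fin.addCases (fun i => ?_) (fun i => ?_) j
  · have hzi := hz (Fin.castAdd n i)
    rw [hx1 i] at hzi
    by_cases ha0 : a = 0
    · have : z (Fin.castAdd n i) = 0 := by
        rcases hzi with ⟨h1, h2⟩ | ⟨h1, h2⟩ <;> rw [ha0] at * <;> linarith
      simp [Fin.append_left, hp', ha0, this]
    · simp [Fin.append_left, hp', ha0, mul_div_cancel₀]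
  · have hzi := hz (Fin.natAdd m i)
    rw [hx2 i] at hzi
    by_cases hb0 : b = 0
    · have : z (Fin.natAdd m i) = 0 := by
        rcases hzi with ⟨h1, h2⟩ | ⟨h1, h2⟩ <;> rw [hb0] at * <;> linarith
      simp [Fin.append_right, hq', hb0, this]
    · simp [Fin.append_right, hq', hb0, mul_div_cancel₀]
end

section
/- Let G_1,...,G_t be DAGs sharing a common source and sink, with pairwise disjoint inner vertex sets, and let G be their union. Then the flow polytope F_1(G) is integrally equivalent to the join F_1(G_1) ⋆ F_1(G_2) ⋆ ... ⋆ F_1(G_t). -/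
open Set

/-- `IsWalkFrom src tgt L a b`: the list of edges `L` forms a directed walk from `a` to `b`. -/
def IsWalkFrom {V E : Type*} (src tgt : E → V) : List E → V → V → Prop
  | [], a, b => a = b
  | e :: es, a, b => src e = a ∧ IsWalkFrom src tgt es (tgt e) b

/-- The indicator vector of a list of edges. -/
def routeIndicator {E : Type*} [DecidableEq E] (L : List E) : E → ℝ :=
  fun e => if e ∈ L then 1 else 0

/-- The flow polytope of a DAG with source `s0` and sink `t0`: the convex hull of the
indicator vectors of its routes. -/
noncomputable def flowPolytope {V E : Type*} [DecidableEq E] (src tgt : E → V)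
    (s0 t0 : V) : Set (E → ℝ) :=
  convexHull ℝ {x : E → ℝ | ∃ L : List E, L ≠ [] ∧ IsWalkFrom src tgt L s0 t0 ∧
    x = routeIndicator L}

/-- Integral equivalence of two subsets of real coordinate spaces. -/
def IntegrallyEquivalent {ι₁ ι₂ : Type*} (A : Set (ι₁ → ℝ)) (B : Set (ι₂ → ℝ)) : Prop :=
  ∃ f : (ι₁ → ℝ) →ᵃ[ℝ] (ι₂ → ℝ),
    Set.BijOn f A B ∧
    ∀ x ∈ A, ((∀ i, ∃ z : ℤ, x i = (z : ℝ)) ↔ (∀ j, ∃ z : ℤ, f x j = (z : ℝ)))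

/-- Embedding of the `i`-th factor into the ambient space of the `t`-fold join. -/
def joinEmb {t : ℕ} (E : Fin t → Type) [DecidableEq (Fin t)] (i : Fin t)
    (x : E i → ℝ) : ((Σ j, E j) ⊕ Fin t) → ℝ :=
  fun c =>
    Sum.rec
      (fun p => if h : p.1 = i then x (cast (congrArg E h) p.2) else 0)
      (fun j => if j = i then 1 else 0) c

/-- The join of the family of polytopes `P i ⊆ ℝ^{E i}`, realized in skew affine
subspaces at pairwise lattice distance one. -/
noncomputable def polytopeJoin {t : ℕ} (E : Fin t → Type)
    (P : ∀ i : Fin t, Set (E i → ℝ)) : Set (((Σ j, E j) ⊕ Fin t) → ℝ) :=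
  convexHull ℝ (⋃ i, joinEmb E i '' P i)

section Aux
variable {V : Type} {t : ℕ} {E : Fin t → Type}

lemma aux_walk_map (src tgt : ∀ i, E i → V) (i : Fin t) :
    ∀ (L : List (E i)) (a b : V),
      IsWalkFrom (src i) (tgt i) L a b ↔
      IsWalkFrom (fun e : Σ j, E j => src e.1 e.2) (fun e : Σ j, E j => tgt e.1 e.2)
        (L.map (Sigma.mk i)) a b := by
  intro L
  induction L with
  | nil => intro a b; simp [IsWalkFrom]
  | cons e es ih => intro a b; simp [IsWalkFrom, ih]

lemma aux_src_ge {E' : Type*} (src tgt : E' → V) (ρ : V → ℕ)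
    (hρ : ∀ e, ρ (src e) < ρ (tgt e)) :
    ∀ (L : List E') (a b : V), IsWalkFrom src tgt L a b → ∀ e ∈ L, ρ a ≤ ρ (src e) := by
  intro L
  induction L with
  | nil => intro a b _ e he; simp at he
  | cons e es ih =>
    intro a b hw e' he'
    obtain ⟨h1, h2⟩ := hw
    rcases List.mem_cons.1 he' with rfl | hmem
    · exact le_of_eq (congrArg ρ h1.symm)
    · exact le_trans (le_of_lt (h1 ▸ hρ e)) (ih _ _ h2 e' hmem)

lemma aux_same_comp (src tgt : ∀ i, E i → V) (s0 t0 : V)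
    (hs0 : ∀ i (e : E i), tgt i e ≠ s0) (ht0 : ∀ i (e : E i), src i e ≠ t0)
    (hinner : ∀ i j, i ≠ j → ∀ v : V, v ≠ s0 → v ≠ t0 →
      ¬((∃ e : E i, src i e = v ∨ tgt i e = v) ∧
        (∃ e : E j, src j e = v ∨ tgt j e = v))) :
    ∀ (es : List (Σ j, E j)) (e : Σ j, E j) (a : V),
      IsWalkFrom (fun e : Σ j, E j => src e.1 e.2) (fun e : Σ j, E j => tgt e.1 e.2)
        (e :: es) a t0 → ∀ e' ∈ e :: es, e'.1 = e.1 := by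
  intro es
  induction es with
  | nil =>
    intro e a _ e' he'
    rcases List.mem_cons.1 he' with rfl | h
    · rfl
    · simp at h
  | cons e2 es2 ih =>
    intro e a hw e' he'
    obtain ⟨h1, hw2⟩ := hw
    have hall : ∀ e' ∈ e2 :: es2, e'.1 = e2.1 := ih e2 (tgt e.1 e.2) hw2
    have h21 : src e2.1 e2.2 = tgt e.1 e.2 := hw2.1
    have hkey : e2.1 = e.1 := by
      by_contra hne
      refine hinner e.1 e2.1 (fun h => hne h.symm) (tgt e.1 e.2) (hs0 e.1 e.2) ?_
        ⟨⟨e.2, Or.inr rfl⟩, ⟨e2.2, Or.inl h21⟩⟩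
      intro hteq
      exact ht0 e2.1 e2.2 (h21.trans hteq)
    rcases List.mem_cons.1 he' with rfl | hmem
    · rfl
    · exact (hall e' hmem).trans hkey

lemma aux_unmap :
    ∀ (L : List (Σ j, E j)) (i : Fin t), (∀ e ∈ L, e.1 = i) →
      ∃ L' : List (E i), L = L'.map (Sigma.mk i) := by
  intro L
  induction L with
  | nil => exact fun i _ => ⟨[], rfl⟩
  | cons e es ih =>
    intro i h
    obtain ⟨j, x⟩ := e
    have hj : j = i := h ⟨j, x⟩ List.mem_cons_self
    subst hj
    obtain ⟨es', rfl⟩ := ih j (fun e' he' => h e' (List.mem_cons_of_mem _ he'))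
    exact ⟨x :: es', rfl⟩

/-- `joinEmb` as an affine map. -/
noncomputable def joinEmbAff (E : Fin t → Type) (i : Fin t) :
    (E i → ℝ) →ᵃ[ℝ] (((Σ j, E j) ⊕ Fin t) → ℝ) where
  toFun := joinEmb E i
  linear := LinearMap.pi (fun c => Sum.rec
      (fun q => if h : q.1 = i then LinearMap.proj (cast (congrArg E h) q.2) else 0)
      (fun _ => 0) c)
  map_vadd' := by
    intro q v
    funext c
    cases c with
    | inl w =>
      by_cases h : w.1 = i <;>
        simp [joinEmb, LinearMap.pi_apply, h]
    | inr j =>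
      simp [joinEmb, LinearMap.pi_apply]

lemma joinEmbAff_coe (E : Fin t → Type) (i : Fin t) :
    ⇑(joinEmbAff E i) = joinEmb E i := rfl

end Aux

/-- Let `G_1, …, G_t` be DAGs sharing a common source and sink with
pairwise disjoint inner vertex sets, and let `G` be their union.  Then
`F_1(G)` is integrally equivalent to the join `F_1(G_1) ⋆ ⋯ ⋆ F_1(G_t)`. -/
theorem flowPolytope_union_join {V : Type} [DecidableEq V] (t : ℕ) (ht : 0 < t)
    (E : Fin t → Type) [∀ i, DecidableEq (E i)]
    (src tgt : ∀ i, E i → V) (s0 t0 : V)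
    (hacyc : ∃ ρ : V → ℕ, ∀ i (e : E i), ρ (src i e) < ρ (tgt i e))
    (hs0 : ∀ i (e : E i), tgt i e ≠ s0) (ht0 : ∀ i (e : E i), src i e ≠ t0)
    (hinner : ∀ i j, i ≠ j → ∀ v : V, v ≠ s0 → v ≠ t0 →
      ¬((∃ e : E i, src i e = v ∨ tgt i e = v) ∧
        (∃ e : E j, src j e = v ∨ tgt j e = v)))
    (hio : ∀ i (v : V), v ≠ s0 → v ≠ t0 → (∃ e : E i, src i e = v ∨ tgt i e = v) →
      ((∃ e : E i, tgt i e = v) ∧ (∃ e : E i, src i e = v))) :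
    IntegrallyEquivalent
      (flowPolytope (fun e : Σ j, E j => src e.1 e.2) (fun e : Σ j, E j => tgt e.1 e.2)
        s0 t0)
      (polytopeJoin E (fun i => flowPolytope (src i) (tgt i) s0 t0)) := by
  classical
  obtain ⟨ρ, hρ⟩ := hacyc
  -- linear algebra setup
  have li : LinearIndependent ℝ (fun e : Σ j, E j => Pi.single e (1:ℝ)) := by
    rw [linearIndependent_iff']
    intro s g hsum e he
    have h := congrFun hsum e
    simpa [Finset.sum_apply, Pi.single_apply, Finset.sum_ite_eq, he] using h
  set p : Submodule ℝ ((Σ j, E j) → ℝ) :=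
    Submodule.span ℝ (Set.range fun e : Σ j, E j => Pi.single e (1:ℝ)) with hp
  let b : Module.Basis (Σ j, E j) ℝ p := Module.Basis.span li
  let cval : Fin t → (Σ j, E j) → ℝ :=
    fun j e => if e.1 = j ∧ src e.1 e.2 = s0 then 1 else 0
  have hcval : ∀ j e, cval j e = if e.1 = j ∧ src e.1 e.2 = s0 then 1 else 0 :=
    fun _ _ => rfl
  let μ : Fin t → (p →ₗ[ℝ] ℝ) := fun j => Module.Basis.constr b ℝ (cval j)
  have hext : ∀ j, ∃ g : ((Σ j, E j) → ℝ) →ₗ[ℝ] ℝ, g.comp p.subtype = μ j :=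
    fun j => LinearMap.exists_extend (μ j)
  let lam : Fin t → (((Σ j, E j) → ℝ) →ₗ[ℝ] ℝ) := fun j => (hext j).choose
  have hlam : ∀ j (x : p), lam j x = μ j x := by
    intro j x
    exact LinearMap.congr_fun (hext j).choose_spec x
  have hsingle_mem : ∀ e : Σ j, E j, Pi.single e (1:ℝ) ∈ p :=
    fun e => Submodule.subset_span ⟨e, rfl⟩
  have hb_coe : ∀ e : Σ j, E j, (b e : (Σ j, E j) → ℝ) = Pi.single e 1 :=
    fun e => congrArg Subtype.val (Module.Basis.span_apply li e)
  have hlam_single : ∀ j e, lam j (Pi.single e 1) = cval j e := by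
    intro j e
    have h1 : lam j ((b e : p) : (Σ j, E j) → ℝ) = μ j (b e) := hlam j (b e)
    rw [hb_coe e] at h1
    rw [h1]
    exact Module.Basis.constr_basis b ℝ (cval j) e
  have hind_sum : ∀ L : List (Σ j, E j),
      routeIndicator L = ∑ e ∈ L.toFinset, Pi.single e (1:ℝ) := by
    intro L
    funext e'
    simp [routeIndicator, Finset.sum_apply, Pi.single_apply, Finset.sum_ite_eq,
      List.mem_toFinset]
  have hind_mem : ∀ L : List (Σ j, E j), routeIndicator L ∈ p := by
    intro L
    rw [hind_sum]
    exact Submodule.sum_mem _ (fun e _ => hsingle_mem e)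
  have hlam_ind : ∀ j (L : List (Σ j, E j)),
      lam j (routeIndicator L) = ∑ e ∈ L.toFinset, cval j e := by
    intro j L
    rw [hind_sum, map_sum]
    exact Finset.sum_congr rfl fun e _ => hlam_single j e
  have hrepr : ∀ (x : p) (e : Σ j, E j), (x : (Σ j, E j) → ℝ) e = b.repr x e := by
    intro x e
    conv_lhs => rw [← b.linearCombination_repr x]
    rw [Finsupp.linearCombination_apply]
    rw [Finsupp.sum]
    simp only [AddSubmonoidClass.coe_finset_sum, SetLike.val_smul, hb_coe]
    rw [Finset.sum_apply]
    simp only [Pi.smul_apply, Pi.single_apply, smul_eq_mul, mul_ite, mul_one, mul_zero,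
      Finset.sum_ite_eq]
    split_ifs with h
    · rfl
    · exact (Finsupp.notMem_support_iff.mp h).symm
  have hlam_p : ∀ (j : Fin t) (x : (Σ j, E j) → ℝ) (hx : x ∈ p),
      lam j x = ∑ e ∈ (b.repr ⟨x, hx⟩).support, x e * cval j e := by
    intro j x hx
    have h1 : lam j x = μ j ⟨x, hx⟩ := hlam j ⟨x, hx⟩
    rw [h1]
    show Module.Basis.constr b ℝ (cval j) ⟨x, hx⟩ = _
    rw [Module.Basis.constr_apply, Finsupp.sum]
    refine Finset.sum_congr rfl fun e _ => ?_
    rw [smul_eq_mul]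
    congr 1
    exact (hrepr ⟨x, hx⟩ e).symm
  -- unique source edge
  have hsrc_filter : ∀ (e : Σ j, E j) (es : List (Σ j, E j)),
      IsWalkFrom (fun e : Σ j, E j => src e.1 e.2) (fun e : Σ j, E j => tgt e.1 e.2)
        (e :: es) s0 t0 →
      (e :: es).toFinset.filter (fun e' => src e'.1 e'.2 = s0) = {e} := by
    intro e es hw
    obtain ⟨h1, h2⟩ := hw
    have hes : ∀ e' ∈ es, src e'.1 e'.2 ≠ s0 := by
      intro e' he' hc
      have hge := aux_src_ge (fun e : Σ j, E j => src e.1 e.2)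
        (fun e : Σ j, E j => tgt e.1 e.2) ρ (fun e => hρ e.1 e.2) es
        (tgt e.1 e.2) t0 h2 e' he'
      have hge2 : ρ (tgt e.1 e.2) ≤ ρ s0 := by simpa [hc] using hge
      have h1' : src e.1 e.2 = s0 := h1
      have h3 := hρ e.1 e.2
      rw [h1'] at h3
      omega
    ext e'
    simp only [Finset.mem_filter, List.mem_toFinset, Finset.mem_singleton, List.mem_cons]
    constructor
    · rintro ⟨rfl | hmem, hsrc⟩
      · rfl
      · exact absurd hsrc (hes _ hmem)
    · rintro rfl
      exact ⟨Or.inl rfl, h1⟩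

  -- value of lam on vertices
  have hvertex : ∀ (i : Fin t) (L' : List (E i)), L' ≠ [] →
      IsWalkFrom (src i) (tgt i) L' s0 t0 →
      ∀ j, lam j (routeIndicator (L'.map (Sigma.mk i))) = if j = i then 1 else 0 := by
    intro i L' hne hw j
    rw [hlam_ind]
    have hcomp : ∀ e ∈ L'.map (Sigma.mk i), Sigma.fst e = i := by
      intro e he
      obtain ⟨x, _, rfl⟩ := List.mem_map.1 he
      rfl
    by_cases hj : j = i
    · subst hj
      obtain ⟨x, L'', rfl⟩ := List.exists_cons_of_ne_nil hne
      have hw2 := (aux_walk_map src tgt j (x :: L'') s0 t0).1 hw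
      have hsum : ∑ e ∈ ((x :: L'').map (Sigma.mk j)).toFinset, cval j e
          = ∑ e ∈ ((x :: L'').map (Sigma.mk j)).toFinset,
              (if src e.1 e.2 = s0 then (1:ℝ) else 0) := by
        refine Finset.sum_congr rfl fun e he => ?_
        rw [hcval]
        simp [hcomp e (List.mem_toFinset.1 he)]
      rw [hsum, Finset.sum_boole]
      rw [show ((x :: L'').map (Sigma.mk j)) = (⟨j, x⟩ : Σ j', E j') :: (L''.map (Sigma.mk j)) from rfl] at hw2 ⊢
      rw [hsrc_filter _ _ hw2]
      simp
    · rw [if_neg hj]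
      refine Finset.sum_eq_zero fun e he => ?_
      rw [hcval]
      rw [if_neg]
      rintro ⟨hc, -⟩
      exact hj ((hcomp e (List.mem_toFinset.1 he)).symm.trans hc).symm
  -- the main linear map
  let ℓ : ((Σ j, E j) → ℝ) →ₗ[ℝ] (((Σ j, E j) ⊕ Fin t) → ℝ) :=
    LinearMap.pi (fun c => Sum.rec (fun s => LinearMap.proj s) (fun j => lam j) c)
  have hinl : ∀ (x : (Σ j, E j) → ℝ) s, ℓ x (Sum.inl s) = x s := fun x s => rfl
  have hinr : ∀ (x : (Σ j, E j) → ℝ) j, ℓ x (Sum.inr j) = lam j x := fun x j => rfl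
  -- action on vertices
  have hfe : ∀ (i : Fin t) (L' : List (E i)), L' ≠ [] →
      IsWalkFrom (src i) (tgt i) L' s0 t0 →
      ℓ (routeIndicator (L'.map (Sigma.mk i))) = joinEmb E i (routeIndicator L') := by
    intro i L' hne hw
    funext c
    cases c with
    | inl q =>
      rw [hinl]
      obtain ⟨j, y⟩ := q
      show routeIndicator (L'.map (Sigma.mk i)) ⟨j, y⟩
        = if h : j = i then routeIndicator L' (cast (congrArg E h) y) else 0
      by_cases hj : j = i
      · subst hj
        rw [dif_pos rfl]
        show (if (⟨j, y⟩ : Σ j', E j') ∈ L'.map (Sigma.mk j) then (1:ℝ) else 0)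
          = if y ∈ L' then 1 else 0
        by_cases hy : y ∈ L'
        · rw [if_pos (List.mem_map.2 ⟨y, hy, rfl⟩), if_pos hy]
        · rw [if_neg, if_neg hy]
          intro hmem
          obtain ⟨z, hz, hze⟩ := List.mem_map.1 hmem
          have hzy : z = y := by simpa using hze
          exact hy (hzy ▸ hz)
      · rw [dif_neg hj]
        show (if (⟨j, y⟩ : Σ j', E j') ∈ L'.map (Sigma.mk i) then (1:ℝ) else 0) = 0
        rw [if_neg]
        intro hmem
        obtain ⟨z, _, hz⟩ := List.mem_map.1 hmem
        exact hj (congrArg Sigma.fst hz).symm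
    | inr j =>
      rw [hinr, hvertex i L' hne hw j]
      rfl
  -- vertex sets
  set VA : Set ((Σ j, E j) → ℝ) := {x | ∃ L : List (Σ j, E j), L ≠ [] ∧
      IsWalkFrom (fun e : Σ j, E j => src e.1 e.2) (fun e : Σ j, E j => tgt e.1 e.2)
        L s0 t0 ∧ x = routeIndicator L} with hVA
  set VB : ∀ i : Fin t, Set (E i → ℝ) := fun i => {x | ∃ L : List (E i), L ≠ [] ∧
      IsWalkFrom (src i) (tgt i) L s0 t0 ∧ x = routeIndicator L} with hVB
  have hA : flowPolytope (fun e : Σ j, E j => src e.1 e.2)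
      (fun e : Σ j, E j => tgt e.1 e.2) s0 t0 = convexHull ℝ VA := rfl
  have hBi : ∀ i, flowPolytope (src i) (tgt i) s0 t0 = convexHull ℝ (VB i) := fun i => rfl
  have hjoin : ∀ i : Fin t,
      joinEmb E i '' (convexHull ℝ (VB i)) = convexHull ℝ (joinEmb E i '' VB i) := by
    intro i
    rw [← joinEmbAff_coe]
    exact AffineMap.image_convexHull _ _
  have hB : polytopeJoin E (fun i => flowPolytope (src i) (tgt i) s0 t0)
      = convexHull ℝ (⋃ i, joinEmb E i '' VB i) := by
    unfold polytopeJoin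
    apply Set.Subset.antisymm
    · refine convexHull_min (iUnion_subset fun i => ?_) (convex_convexHull ℝ _)
      show joinEmb E i '' flowPolytope (src i) (tgt i) s0 t0
        ⊆ convexHull ℝ (⋃ i, joinEmb E i '' VB i)
      rw [hBi i, hjoin i]
      exact convexHull_mono (subset_iUnion (fun i => joinEmb E i '' VB i) i)
    · refine convexHull_mono (iUnion_mono fun i => ?_)
      show joinEmb E i '' VB i ⊆ joinEmb E i '' flowPolytope (src i) (tgt i) s0 t0
      rw [hBi i]
      exact Set.image_mono (subset_convexHull ℝ (VB i))
  have himage : ℓ '' VA = ⋃ i, joinEmb E i '' VB i := by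
    apply Set.Subset.antisymm
    · rintro y ⟨x, ⟨L, hne, hw, rfl⟩, rfl⟩
      obtain ⟨e, es, rfl⟩ := List.exists_cons_of_ne_nil hne
      have hall := aux_same_comp src tgt s0 t0 hs0 ht0 hinner es e s0 hw
      obtain ⟨L', hL'⟩ := aux_unmap (e :: es) e.1 hall
      have hne' : L' ≠ [] := by
        rintro rfl
        simp at hL'
      rw [hL'] at hw
      have hw' : IsWalkFrom (src e.1) (tgt e.1) L' s0 t0 :=
        (aux_walk_map src tgt e.1 L' s0 t0).2 hw
      rw [hL', hfe e.1 L' hne' hw']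
      exact mem_iUnion.2 ⟨e.1, mem_image_of_mem _ ⟨L', hne', hw', rfl⟩⟩
    · rintro y hy
      simp only [mem_iUnion, mem_image] at hy
      obtain ⟨i, x, ⟨L', hne, hw, rfl⟩, rfl⟩ := hy
      refine ⟨routeIndicator (L'.map (Sigma.mk i)),
        ⟨L'.map (Sigma.mk i), ?_, (aux_walk_map src tgt i L' s0 t0).1 hw, rfl⟩,
        hfe i L' hne hw⟩
      simpa using hne
  have hAB : ℓ.toAffineMap '' (flowPolytope (fun e : Σ j, E j => src e.1 e.2)
      (fun e : Σ j, E j => tgt e.1 e.2) s0 t0)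
      = polytopeJoin E (fun i => flowPolytope (src i) (tgt i) s0 t0) := by
    rw [hA, hB, LinearMap.coe_toAffineMap, ℓ.image_convexHull, himage]
  have hinj : Function.Injective ℓ := by
    intro x y h
    funext s
    have h2 := congrFun h (Sum.inl s)
    rwa [hinl, hinl] at h2
  have hAp : flowPolytope (fun e : Σ j, E j => src e.1 e.2)
      (fun e : Σ j, E j => tgt e.1 e.2) s0 t0 ⊆ (p : Set ((Σ j, E j) → ℝ)) := by
    rw [hA]
    refine convexHull_min ?_ p.convex
    rintro x ⟨L, -, -, rfl⟩
    exact hind_mem L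
  refine ⟨ℓ.toAffineMap, ⟨?_, ?_, ?_⟩, ?_⟩
  · intro x hx
    rw [← hAB]
    exact mem_image_of_mem _ hx
  · intro x _ y _ h
    exact hinj h
  · rw [Set.SurjOn, hAB]
  · intro x hxA
    have hxp : x ∈ p := hAp hxA
    constructor
    · intro hint c
      cases c with
      | inl s =>
        obtain ⟨z, hz⟩ := hint s
        exact ⟨z, by rwa [show (ℓ.toAffineMap x) (Sum.inl s) = x s from rfl]⟩
      | inr j =>
        rw [show (ℓ.toAffineMap x) (Sum.inr j) = lam j x from rfl]
        rw [hlam_p j x hxp]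
        refine ⟨∑ e ∈ (b.repr ⟨x, hxp⟩).support,
          (hint e).choose * (if e.1 = j ∧ src e.1 e.2 = s0 then 1 else 0 : ℤ), ?_⟩
        push_cast
        refine Finset.sum_congr rfl fun e _ => ?_
        rw [← (hint e).choose_spec, hcval]
    · intro hint s
      obtain ⟨z, hz⟩ := hint (Sum.inl s)
      exact ⟨z, by rwa [show (ℓ.toAffineMap x) (Sum.inl s) = x s from rfl] at hz⟩
end

section
/- Let (G, F) be a full DAG with an ample framing, inducing an edge labeling of G by {1, 2} such that at each inner vertex the two incoming edges receive distinct labels and the two outgoing edges receive distinct labels. If every route of G switches edge labels at most twice (where a switch is a pair of consecutive edges along the route with different labels), then the g-polytope of (G,F) is locally anti-blocking. -/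
open Set

/-- A vertex is inner if it has both an incoming and an outgoing edge. -/
def InnerVtx {V E : Type*} (src tgt : E → V) (v : V) : Prop :=
  (∃ e, tgt e = v) ∧ (∃ e, src e = v)

/-- A route: a nonempty directed walk from a source vertex (no incoming edges) to a sink
vertex (no outgoing edges). -/
def IsRoute {V E : Type*} (src tgt : E → V) (L : List E) : Prop :=
  L ≠ [] ∧ ∃ a b : V, IsWalkFrom src tgt L a b ∧ (∀ e, tgt e ≠ a) ∧ (∀ e, src e ≠ b)

/-- The graph is acyclic: there is a compatible linear order on the vertices. -/
def IsAcyclic {V E : Type*} (src tgt : E → V) : Prop :=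
  ∃ ρ : V → ℕ, ∀ e, ρ (src e) < ρ (tgt e)

/-- An ample framing of a full DAG: a labeling of the edges by `{1, 2}` such that every
inner vertex has exactly two incoming edges with distinct labels and exactly two outgoing
edges with distinct labels. -/
def AmpleFraming {V E : Type*} (src tgt : E → V) (ℓ : E → ℕ) : Prop :=
  (∀ e, ℓ e = 1 ∨ ℓ e = 2) ∧
  ∀ v, InnerVtx src tgt v →
    (∃ e1 e2 : E, e1 ≠ e2 ∧ tgt e1 = v ∧ tgt e2 = v ∧ ℓ e1 ≠ ℓ e2 ∧
      ∀ e, tgt e = v → e = e1 ∨ e = e2) ∧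
    (∃ e1 e2 : E, e1 ≠ e2 ∧ src e1 = v ∧ src e2 = v ∧ ℓ e1 ≠ ℓ e2 ∧
      ∀ e, src e = v → e = e1 ∨ e = e2)

/-- A route is exceptional when all its edges carry the same framing label. -/
def ExceptionalRoute {V E : Type*} (src tgt : E → V) (ℓ : E → ℕ) (L : List E) : Prop :=
  IsRoute src tgt L ∧ ∀ e ∈ L, ∀ f ∈ L, ℓ e = ℓ f

/-- The framing is ample: every edge lies on an exceptional route. -/
def IsAmple {V E : Type*} (src tgt : E → V) (ℓ : E → ℕ) : Prop :=
  ∀ e : E, ∃ L : List E, ExceptionalRoute src tgt ℓ L ∧ e ∈ L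

/-- The contribution of a consecutive pair of edges of a route to the g-vector. -/
def gEntry {E : Type*} (ℓ : E → ℕ) (p : E × E) : ℝ :=
  if ℓ p.1 = 1 ∧ ℓ p.2 = 2 then -1 else if ℓ p.1 = 2 ∧ ℓ p.2 = 1 then 1 else 0

/-- The g-vector of a route, indexed by the inner vertices. -/
def gvec {V E : Type*} [DecidableEq V] (src tgt : E → V) (ℓ : E → ℕ) (L : List E) :
    {v : V // InnerVtx src tgt v} → ℝ :=
  fun v => ((L.zip L.tail).map (fun p => if tgt p.1 = v.1 then gEntry ℓ p else 0)).sum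

/-- The g-polytope: the convex hull of the g-vectors of all routes. -/
noncomputable def gPolytope {V E : Type*} [DecidableEq V] (src tgt : E → V)
    (ℓ : E → ℕ) : Set ({v : V // InnerVtx src tgt v} → ℝ) :=
  convexHull ℝ {x | ∃ L : List E, IsRoute src tgt L ∧ x = gvec src tgt ℓ L}

/-- The number of label switches along a route. -/
def switches {E : Type*} (ℓ : E → ℕ) (L : List E) : ℕ :=
  (L.zip L.tail).countP (fun p => ℓ p.1 != ℓ p.2)

set_option linter.unusedSectionVars false

section aux
variable {V E : Type} [DecidableEq V] {src tgt : E → V} {ℓ : E → ℕ}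

lemma walk_append {L1 L2 : List E} {a b : V} :
    IsWalkFrom src tgt (L1 ++ L2) a b ↔
      ∃ c, IsWalkFrom src tgt L1 a c ∧ IsWalkFrom src tgt L2 c b := by
  induction L1 generalizing a with
  | nil => simp [IsWalkFrom]
  | cons e es ih => simp [IsWalkFrom, ih, and_assoc]

lemma walk_zip_consec {L : List E} {a b : V} (h : IsWalkFrom src tgt L a b) :
    ∀ p ∈ L.zip L.tail, tgt p.1 = src p.2 := by
  induction L generalizing a with
  | nil => simp
  | cons e es ih =>
    obtain ⟨he, hw⟩ := h
    intro p hp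
    cases es with
    | nil => simp at hp
    | cons f t =>
      simp only [List.tail_cons, List.zip_cons_cons, List.mem_cons] at hp
      rcases hp with rfl | hp
      · exact hw.1.symm
      · exact ih hw p hp

lemma pairs_append {X Y : List E} (hX : X ≠ []) (hY : Y ≠ []) :
    (X ++ Y).zip (X ++ Y).tail =
      X.zip X.tail ++ (X.getLast hX, Y.head hY) :: Y.zip Y.tail := by
  induction X with
  | nil => simp at hX
  | cons e es ih =>
    cases es with
    | nil =>
      cases Y with
      | nil => simp at hY
      | cons y ys => simp [List.zip_cons_cons]
    | cons f t =>
      have h2 : (f :: t : List E) ≠ [] := by simp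
      have := ih h2
      simp only [List.cons_append, List.tail_cons, List.zip_cons_cons] at *
      rw [this]
      simp [List.getLast_cons]

lemma gEntry_eq_zero {p : E × E} (h : ℓ p.1 = ℓ p.2) : gEntry ℓ p = 0 := by
  unfold gEntry
  rw [if_neg (by omega), if_neg (by omega)]

lemma gvec_two_blocks {α β : ℕ} {X Y : List E} {x y : E} (hX : X ≠ []) (hY : Y ≠ [])
    (hx : X.getLast hX = x) (hy : Y.head hY = y)
    (hlX : ∀ e ∈ X, ℓ e = α) (hlY : ∀ e ∈ Y, ℓ e = β) :
    gvec src tgt ℓ (X ++ Y) =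
      fun v => if tgt x = v.1 then gEntry ℓ (x, y) else 0 := by
  funext v
  unfold gvec
  rw [pairs_append hX hY, hx, hy]
  rw [List.map_append, List.sum_append, List.map_cons, List.sum_cons]
  have hXz : ((X.zip X.tail).map (fun p => if tgt p.1 = v.1 then gEntry ℓ p else 0)).sum = 0 := by
    apply List.sum_eq_zero
    intro z hz
    simp only [List.mem_map] at hz
    obtain ⟨p, hp, rfl⟩ := hz
    obtain ⟨h1, h2⟩ := List.of_mem_zip hp
    have : ℓ p.1 = ℓ p.2 := by rw [hlX _ h1, hlX _ (List.mem_of_mem_tail h2)]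
    simp [gEntry_eq_zero this]
  have hYz : ((Y.zip Y.tail).map (fun p => if tgt p.1 = v.1 then gEntry ℓ p else 0)).sum = 0 := by
    apply List.sum_eq_zero
    intro z hz
    simp only [List.mem_map] at hz
    obtain ⟨p, hp, rfl⟩ := hz
    obtain ⟨h1, h2⟩ := List.of_mem_zip hp
    have : ℓ p.1 = ℓ p.2 := by rw [hlY _ h1, hlY _ (List.mem_of_mem_tail h2)]
    simp [gEntry_eq_zero this]
  rw [hXz, hYz]
  ring

lemma gvec_exceptional {L : List E} (h : ∀ e ∈ L, ∀ f ∈ L, ℓ e = ℓ f) :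
    gvec src tgt ℓ L = 0 := by
  funext v
  apply List.sum_eq_zero
  intro z hz
  simp only [List.mem_map] at hz
  obtain ⟨p, hp, rfl⟩ := hz
  obtain ⟨h1, h2⟩ := List.of_mem_zip hp
  simp [gEntry_eq_zero (h _ h1 _ (List.mem_of_mem_tail h2))]

lemma exists_zero_gvec (hample : IsAmple src tgt ℓ) (e : E) :
    ∃ R, IsRoute src tgt R ∧ gvec src tgt ℓ R = 0 := by
  obtain ⟨M, ⟨hMr, hMlab⟩, _⟩ := hample e
  exact ⟨M, hMr, gvec_exceptional hMlab⟩

lemma single_switch_mem (hample : IsAmple src tgt ℓ)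
    {p : E × E} (hc : tgt p.1 = src p.2) :
    ∃ R, IsRoute src tgt R ∧
      gvec src tgt ℓ R = fun v => if tgt p.1 = v.1 then gEntry ℓ p else 0 := by
  obtain ⟨M, ⟨⟨hMne, a, b, hMw, ha, hb⟩, hMlab⟩, hpM⟩ := hample p.1
  obtain ⟨N, ⟨⟨hNne, c, d, hNw, hc', hd⟩, hNlab⟩, hqN⟩ := hample p.2
  obtain ⟨A, B, rfl⟩ := List.append_of_mem hpM
  obtain ⟨C, D, rfl⟩ := List.append_of_mem hqN
  have hXne : (A ++ [p.1] : List E) ≠ [] := by simp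
  have hYne : (p.2 :: D : List E) ≠ [] := by simp
  refine ⟨(A ++ [p.1]) ++ (p.2 :: D), ⟨by simp, a, d, ?_, ha, hd⟩, ?_⟩
  · rw [walk_append]
    refine ⟨tgt p.1, ?_, ?_⟩
    · rw [walk_append] at hMw
      obtain ⟨c1, h1, hsrc, _⟩ := hMw
      rw [walk_append]
      exact ⟨c1, h1, hsrc, rfl⟩
    · rw [walk_append] at hNw
      obtain ⟨c2, _, h2⟩ := hNw
      obtain ⟨hsrc, hD⟩ := h2
      exact ⟨hc.symm, hD⟩
  · refine gvec_two_blocks (α := ℓ p.1) (β := ℓ p.2) hXne hYne List.getLast_concat rfl ?_ ?_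
    · intro f hf
      apply hMlab f ?_ p.1 (by simp)
      simp only [List.mem_append, List.mem_singleton] at hf
      rcases hf with hf | rfl
      · simp [hf]
      · simp
    · intro f hf
      apply hNlab f ?_ p.2 (by simp)
      simp only [List.mem_cons] at hf
      rcases hf with rfl | hf
      · simp
      · simp [hf]

lemma sum_map_filter {γ : Type*} (l : List γ) (f : γ → ℝ) (q : γ → Bool)
    (h : ∀ a ∈ l, q a = false → f a = 0) :
    (l.map f).sum = ((l.filter q).map f).sum := by
  induction l with
  | nil => simp
  | cons a t ih =>
    have ih' := ih (fun b hb => h b (List.mem_cons_of_mem _ hb))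
    by_cases hq : q a
    · simp [List.filter_cons, hq, ih']
    · simp only [Bool.not_eq_true] at hq
      simp [List.filter_cons, hq, ih', h a List.mem_cons_self hq]

end aux

section main
variable {V E : Type} [DecidableEq V] {src tgt : E → V} {ℓ : E → ℕ}

lemma update_gvec_mem (hample : IsAmple src tgt ℓ)
    (hsw : ∀ L : List E, IsRoute src tgt L → switches ℓ L ≤ 2)
    {L : List E} (hL : IsRoute src tgt L) (v : {v : V // InnerVtx src tgt v}) :
    ∃ R, IsRoute src tgt R ∧
      Function.update (gvec src tgt ℓ L) v 0 = gvec src tgt ℓ R := by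
  obtain ⟨hne, a, b, hw, ha, hb⟩ := hL
  have hcons : ∀ p ∈ L.zip L.tail, tgt p.1 = src p.2 := walk_zip_consec hw
  have hlen : ((L.zip L.tail).filter (fun p => ℓ p.1 != ℓ p.2)).length ≤ 2 := by
    rw [← List.countP_eq_length_filter]
    exact hsw L ⟨hne, a, b, hw, ha, hb⟩
  have hgv : ∀ w : {v : V // InnerVtx src tgt v}, gvec src tgt ℓ L w =
      (((L.zip L.tail).filter (fun p => ℓ p.1 != ℓ p.2)).map
        (fun p => if tgt p.1 = w.1 then gEntry ℓ p else 0)).sum := by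
    intro w
    apply sum_map_filter
    intro p _ hp
    have : ℓ p.1 = ℓ p.2 := by simpa using hp
    simp [gEntry_eq_zero this]
  -- a head edge for producing the zero route
  obtain ⟨e0, L', rfl⟩ : ∃ e0 L', L = e0 :: L' := by
    cases L with
    | nil => exact absurd rfl hne
    | cons e t => exact ⟨e, t, rfl⟩
  rcases hfil : ((e0 :: L').zip (e0 :: L').tail).filter (fun p => ℓ p.1 != ℓ p.2) with
      _ | ⟨p, _ | ⟨q, _ | ⟨r, t⟩⟩⟩
  · -- no switches
    refine ⟨e0 :: L', ⟨hne, a, b, hw, ha, hb⟩, ?_⟩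
    funext w
    rw [Function.update_apply]
    split_ifs with h
    · subst h; rw [hgv, hfil]; simp
    · rfl
  · -- one switch
    have hpmem : p ∈ ((e0 :: L').zip (e0 :: L').tail).filter (fun p => ℓ p.1 != ℓ p.2) := by
      rw [hfil]; simp
    rw [List.mem_filter] at hpmem
    by_cases hv : tgt p.1 = v.1
    · obtain ⟨R, hR, hRz⟩ := exists_zero_gvec hample e0
      refine ⟨R, hR, ?_⟩
      funext w
      rw [Function.update_apply, hRz]
      split_ifs with h
      · rfl
      · rw [hgv, hfil]
        simp only [List.map_cons, List.map_nil, List.sum_cons, List.sum_nil, add_zero]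
        rw [if_neg]
        · rfl
        · intro hcontra
          exact h (Subtype.ext (hcontra.symm.trans hv))
    · refine ⟨e0 :: L', ⟨hne, a, b, hw, ha, hb⟩, ?_⟩
      funext w
      rw [Function.update_apply]
      split_ifs with h
      · subst h
        rw [hgv, hfil]
        simp [if_neg hv]
      · rfl
  · -- two switches
    have hpmem : p ∈ ((e0 :: L').zip (e0 :: L').tail).filter (fun p => ℓ p.1 != ℓ p.2) := by
      rw [hfil]; simp
    have hqmem : q ∈ ((e0 :: L').zip (e0 :: L').tail).filter (fun p => ℓ p.1 != ℓ p.2) := by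
      rw [hfil]; simp
    rw [List.mem_filter] at hpmem hqmem
    have hpc : tgt p.1 = src p.2 := hcons p hpmem.1
    have hqc : tgt q.1 = src q.2 := hcons q hqmem.1
    have hgv2 : ∀ w : {v : V // InnerVtx src tgt v}, gvec src tgt ℓ (e0 :: L') w =
        (if tgt p.1 = w.1 then gEntry ℓ p else 0) + (if tgt q.1 = w.1 then gEntry ℓ q else 0) := by
      intro w; rw [hgv, hfil]; simp
    by_cases hv1 : tgt p.1 = v.1 <;> by_cases hv2 : tgt q.1 = v.1
    · -- both at v : update is 0
      obtain ⟨R, hR, hRz⟩ := exists_zero_gvec hample e0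
      refine ⟨R, hR, ?_⟩
      funext w
      rw [Function.update_apply, hRz]
      split_ifs with h
      · rfl
      · rw [hgv2]
        have hw1 : ¬ tgt p.1 = w.1 := fun hc => h (Subtype.ext (hc.symm.trans hv1))
        have hw2 : ¬ tgt q.1 = w.1 := fun hc => h (Subtype.ext (hc.symm.trans hv2))
        simp [hw1, hw2]
    · -- p at v, q elsewhere : result is δ_q
      obtain ⟨R, hR, hRq⟩ := single_switch_mem hample hqc
      refine ⟨R, hR, ?_⟩
      funext w
      rw [Function.update_apply, hRq]
      split_ifs with h
      · subst h; simp [if_neg hv2]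
      · rw [hgv2]
        have hw1 : ¬ tgt p.1 = w.1 := fun hc => h (Subtype.ext (hc.symm.trans hv1))
        simp [hw1]
    · -- q at v, p elsewhere : result is δ_p
      obtain ⟨R, hR, hRp⟩ := single_switch_mem hample hpc
      refine ⟨R, hR, ?_⟩
      funext w
      rw [Function.update_apply, hRp]
      split_ifs with h
      · subst h; simp [if_neg hv1]
      · rw [hgv2]
        have hw2 : ¬ tgt q.1 = w.1 := fun hc => h (Subtype.ext (hc.symm.trans hv2))
        simp [hw2]
    · -- neither at v : update is gvec L
      refine ⟨e0 :: L', ⟨hne, a, b, hw, ha, hb⟩, ?_⟩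
      funext w
      rw [Function.update_apply]
      split_ifs with h
      · subst h
        rw [hgv2]
        simp [if_neg hv1, if_neg hv2]
      · rfl
  · exfalso
    rw [hfil] at hlen
    simp at hlen
end main

section assemble
variable {V E : Type} [DecidableEq V] {src tgt : E → V} {ℓ : E → ℕ}

/-- zeroing a coordinate, as a linear map -/
def zeroAt {ι : Type} [DecidableEq ι] (v : ι) : (ι → ℝ) →ₗ[ℝ] (ι → ℝ) where
  toFun x := Function.update x v 0
  map_add' x y := by
    funext i
    by_cases h : i = v <;> simp [Function.update_apply, h]
  map_smul' c x := by
    funext i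
    by_cases h : i = v <;> simp [Function.update_apply, h]

lemma gPolytope_zero_closed (hample : IsAmple src tgt ℓ)
    (hsw : ∀ L : List E, IsRoute src tgt L → switches ℓ L ≤ 2) :
    ∀ x ∈ gPolytope src tgt ℓ, ∀ v, Function.update x v 0 ∈ gPolytope src tgt ℓ := by
  intro x hx v
  have : gPolytope src tgt ℓ ⊆ (zeroAt v) ⁻¹' (gPolytope src tgt ℓ) := by
    apply convexHull_min
    · rintro y ⟨L, hL, rfl⟩
      obtain ⟨R, hR, hRe⟩ := update_gvec_mem hample hsw hL v
      have : zeroAt v (gvec src tgt ℓ L) = gvec src tgt ℓ R := hRe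
      rw [Set.mem_preimage, this]
      exact subset_convexHull ℝ _ ⟨R, hR, rfl⟩
    · exact (convex_convexHull ℝ _).linear_preimage _
  exact this hx

lemma gvec_support_finite (L : List E) :
    (Function.support (gvec src tgt ℓ L)).Finite := by
  have hsub : Function.support (gvec src tgt ℓ L) ⊆
      (Subtype.val) ⁻¹' {u | u ∈ (L.zip L.tail).map (fun p => tgt p.1)} := by
    intro v hv
    simp only [Function.mem_support] at hv
    by_contra hmem
    apply hv
    apply List.sum_eq_zero
    intro z hz
    simp only [List.mem_map] at hz
    obtain ⟨p, hp, rfl⟩ := hz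
    rw [if_neg]
    intro hc
    exact hmem (by simp only [Set.mem_preimage, Set.mem_setOf_eq, List.mem_map]; exact ⟨p, hp, hc⟩)
  exact Set.Finite.subset (Set.Finite.preimage (Subtype.val_injective.injOn)
    (List.finite_toSet _)) hsub

lemma gPolytope_support_finite :
    ∀ x ∈ gPolytope src tgt ℓ, (Function.support x).Finite := by
  intro x hx
  have : gPolytope src tgt ℓ ⊆ {x | (Function.support x).Finite} := by
    apply convexHull_min
    · rintro y ⟨L, _, rfl⟩
      exact gvec_support_finite L
    · intro y hy z hz s t _ _ _
      refine Set.Finite.subset (Set.Finite.union hy hz) ?_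
      refine (Function.support_add _ _).trans ?_
      exact Set.union_subset_union (Function.support_const_smul_subset _ _)
        (Function.support_const_smul_subset _ _)
  exact this hx

lemma antiblocking_aux {ι : Type} [DecidableEq ι] (P : Set (ι → ℝ)) (hP : Convex ℝ P)
    (hz : ∀ x ∈ P, ∀ v, Function.update x v 0 ∈ P) (s : Finset ι) :
    ∀ x ∈ P, ∀ y : ι → ℝ, (∀ i, 0 ≤ y i ∧ y i ≤ x i) →
      (∀ i ∉ s, y i = x i) → y ∈ P := by
  induction s using Finset.induction_on with
  | empty =>
    intro x hx y _ hagree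
    have : y = x := funext fun i => hagree i (by simp)
    rwa [this]
  | insert a t ha ih =>
    intro x hx y hy hagree
    by_cases hya : y a = x a
    · refine ih x hx y hy fun i hi => ?_
      by_cases h : i = a
      · rw [h]; exact hya
      · exact hagree i (by simp [h, hi])
    · have h0 : 0 ≤ y a := (hy a).1
      have h1 : y a < x a := lt_of_le_of_ne (hy a).2 hya
      have hxa : 0 < x a := lt_of_le_of_lt h0 h1
      set c := y a / x a with hc
      have hc0 : 0 ≤ c := div_nonneg h0 hxa.le
      have hc1 : c ≤ 1 := by rw [hc, div_le_one hxa]; exact h1.le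
      have key : y = c • Function.update y a (x a) + (1 - c) • Function.update y a 0 := by
        funext i
        by_cases h : i = a
        · subst h
          simp only [Pi.add_apply, Pi.smul_apply, Function.update_self, smul_eq_mul, hc]
          field_simp
          ring
        · simp only [Pi.add_apply, Pi.smul_apply, Function.update_of_ne h, smul_eq_mul]
          ring
      have m1 : Function.update y a (x a) ∈ P := by
        refine ih x hx _ (fun i => ?_) (fun i hi => ?_)
        · by_cases h : i = a
          · subst h; simp [hxa.le]
          · simp [Function.update_of_ne h, hy i]
        · by_cases h : i = a
          · subst h; simp
          · rw [Function.update_of_ne h]; exact hagree i (by simp [h, hi])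
      have m2 : Function.update y a 0 ∈ P := by
        refine ih (Function.update x a 0) (hz x hx a) _ (fun i => ?_) (fun i hi => ?_)
        · by_cases h : i = a
          · subst h; simp
          · simp [Function.update_of_ne h, hy i]
        · by_cases h : i = a
          · subst h; simp
          · rw [Function.update_of_ne h, Function.update_of_ne h]
            exact hagree i (by simp [h, hi])
      rw [key]
      exact hP m1 m2 hc0 (by linarith) (by ring)

end assemble

section scale
variable {ι : Type} [DecidableEq ι]

/-- coordinatewise scaling as a linear map -/
def scaleBy (σ : ι → ℝ) : (ι → ℝ) →ₗ[ℝ] (ι → ℝ) where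
  toFun x := fun i => σ i * x i
  map_add' x y := by funext i; simp; ring
  map_smul' c x := by funext i; simp; ring

end scale

/-- Let `(G, F)` be a full DAG with an ample framing.  If every route of
`G` switches edge labels at most twice, then the g-polytope of `(G, F)` is locally
anti-blocking. -/
theorem gPolytope_locallyAntiBlocking_of_switches_le_two {V E : Type}
    [DecidableEq V] (src tgt : E → V) (ℓ : E → ℕ)
    (hacyc : IsAcyclic src tgt)
    (hframe : AmpleFraming src tgt ℓ)
    (hample : IsAmple src tgt ℓ)
    (hsw : ∀ L : List E, IsRoute src tgt L → switches ℓ L ≤ 2) :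
    LocallyAntiBlocking (gPolytope src tgt ℓ) := by
  intro σ hσ
  set P := gPolytope src tgt ℓ with hPdef
  have himg : (fun x i => σ i * x i) '' P = (scaleBy σ) '' P := rfl
  have hconv : Convex ℝ ((scaleBy σ) '' P) :=
    (convex_convexHull ℝ _).linear_image _
  have hzero : ∀ x ∈ (scaleBy σ) '' P, ∀ v, Function.update x v 0 ∈ (scaleBy σ) '' P := by
    rintro x ⟨p, hp, rfl⟩ v
    refine ⟨Function.update p v 0, gPolytope_zero_closed hample hsw p hp v, ?_⟩
    funext i
    by_cases h : i = v
    · subst h; simp [scaleBy, Function.update_self]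
    · simp [scaleBy, Function.update_of_ne h]
  intro x hx y hy
  obtain ⟨hx1, hx2⟩ := hx
  have hxfin : (Function.support x).Finite := by
    obtain ⟨p, hp, rfl⟩ := hx1
    refine Set.Finite.subset (gPolytope_support_finite p hp) ?_
    intro i hi
    simp only [Function.mem_support] at hi ⊢
    intro h
    apply hi
    show σ i * p i = 0
    rw [h, mul_zero]
  refine ⟨?_, fun i => (hy i).1⟩
  rw [himg]
  refine antiblocking_aux _ hconv hzero hxfin.toFinset x (by rw [← himg]; exact hx1) y hy ?_
  intro i hi
  have hxi : x i = 0 := by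
    by_contra h
    exact hi (by simp [Set.Finite.mem_toFinset, Function.mem_support, h])
  have := hy i
  rw [hxi] at this
  linarith [this.1, this.2, hxi]
end

section
/- Let (G, F) be an amply framed full DAG whose g-polytope P is locally anti-blocking. Then every route of G switches edge labels at most twice, i.e., every g-vector of a route has at most two nonzero coordinates. -/
set_option linter.unusedSectionVars false
set_option maxHeartbeats 1000000


open Set

section helpers

variable {V E : Type} [DecidableEq V] {src tgt : E → V} {ℓ : E → ℕ} {ρ : V → ℕ}

lemma pair_fst_mem {L : List E} {p : E × E} (hp : p ∈ L.zip L.tail) : p.1 ∈ L := by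
  have h : (p.1, p.2) ∈ L.zip L.tail := by simpa using hp
  exact (List.of_mem_zip h).1

lemma walk_src_le (hρ : ∀ e, ρ (src e) < ρ (tgt e)) :
    ∀ (L : List E) (a b : V), IsWalkFrom src tgt L a b → ∀ e ∈ L, ρ a ≤ ρ (src e) := by
  intro L
  induction L with
  | nil => intro a b _ e he; exact absurd he List.not_mem_nil
  | cons f L ih =>
    intro a b hw e he
    have hw2 : src f = a ∧ IsWalkFrom src tgt L (tgt f) b := hw
    obtain ⟨hf, hw'⟩ := hw2
    rcases List.mem_cons.mp he with rfl | he'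
    · exact le_of_eq (congrArg ρ hf.symm)
    · refine le_of_lt ?_
      calc ρ a = ρ (src f) := congrArg ρ hf.symm
        _ < ρ (tgt f) := hρ f
        _ ≤ ρ (src e) := ih _ _ hw' e he'

lemma walk_pair_lt (hρ : ∀ e, ρ (src e) < ρ (tgt e))
    (L : List E) (a b : V) (hw : IsWalkFrom src tgt L a b)
    {p : E × E} (hp : p ∈ L.zip L.tail) : ρ a < ρ (tgt p.1) :=
  lt_of_le_of_lt (walk_src_le hρ L a b hw p.1 (pair_fst_mem hp)) (hρ p.1)

lemma walk_adj :
    ∀ (L : List E) (a b : V), IsWalkFrom src tgt L a b →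
      ∀ p ∈ L.zip L.tail, src p.2 = tgt p.1 := by
  intro L
  induction L with
  | nil => intro a b _ p hp; simp at hp
  | cons f L ih =>
    intro a b hw p hp
    have hw2 : src f = a ∧ IsWalkFrom src tgt L (tgt f) b := hw
    obtain ⟨-, hw'⟩ := hw2
    cases L with
    | nil => simp at hp
    | cons g L' =>
      have hw3 : src g = tgt f ∧ IsWalkFrom src tgt L' (tgt g) b := hw'
      have hz : (f :: g :: L').zip (f :: g :: L').tail
          = (f, g) :: ((g :: L').zip (g :: L').tail) := rfl
      rw [hz] at hp
      rcases List.mem_cons.mp hp with rfl | hp'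
      · exact hw3.1
      · exact ih _ _ hw' p hp'

lemma walk_pairwise (hρ : ∀ e, ρ (src e) < ρ (tgt e)) :
    ∀ (L : List E) (a b : V), IsWalkFrom src tgt L a b →
      (L.zip L.tail).Pairwise (fun p q => ρ (tgt p.1) < ρ (tgt q.1)) := by
  intro L
  induction L with
  | nil => intro a b _; simp
  | cons f L ih =>
    intro a b hw
    have hw2 : src f = a ∧ IsWalkFrom src tgt L (tgt f) b := hw
    obtain ⟨-, hw'⟩ := hw2
    cases L with
    | nil => simp
    | cons g L' =>
      have hz : (f :: g :: L').zip (f :: g :: L').tail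
          = (f, g) :: ((g :: L').zip (g :: L').tail) := rfl
      rw [hz]
      refine List.Pairwise.cons ?_ (ih _ _ hw')
      intro q hq
      exact walk_pair_lt hρ _ _ _ hw' hq

lemma gvec_cons (e f : E) (L : List E) (v : {v : V // InnerVtx src tgt v}) :
    gvec src tgt ℓ (e :: f :: L) v
      = (if tgt e = v.1 then gEntry ℓ (e, f) else 0) + gvec src tgt ℓ (f :: L) v := by
  simp [gvec]

lemma sum_zero_of_ne (v : V) :
    ∀ (Z : List (E × E)), (∀ p ∈ Z, tgt p.1 ≠ v) →
      (Z.map (fun p => if tgt p.1 = v then gEntry ℓ p else 0)).sum = 0 := by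
  intro Z h
  apply List.sum_eq_zero
  intro x hx
  obtain ⟨p, hp, rfl⟩ := List.mem_map.mp hx
  rw [if_neg (h p hp)]

lemma gvec_pair (hρ : ∀ e, ρ (src e) < ρ (tgt e)) :
    ∀ (L : List E) (a b : V), IsWalkFrom src tgt L a b →
      ∀ p ∈ L.zip L.tail, ∀ (h : InnerVtx src tgt (tgt p.1)),
        gvec src tgt ℓ L ⟨tgt p.1, h⟩ = gEntry ℓ p := by
  intro L
  induction L with
  | nil => intro a b _ p hp; simp at hp
  | cons f L ih =>
    intro a b hw p hp hin
    have hw2 : src f = a ∧ IsWalkFrom src tgt L (tgt f) b := hw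
    obtain ⟨-, hw'⟩ := hw2
    cases L with
    | nil => simp at hp
    | cons g L' =>
      have hz : (f :: g :: L').zip (f :: g :: L').tail
          = (f, g) :: ((g :: L').zip (g :: L').tail) := rfl
      rw [hz] at hp
      rcases List.mem_cons.mp hp with heq | hp'
      · subst heq
        rw [gvec_cons, if_pos rfl]
        have hrest : gvec src tgt ℓ (g :: L') ⟨tgt (f, g).1, hin⟩ = 0 := by
          apply sum_zero_of_ne
          intro q hq h
          have hlt := walk_pair_lt hρ _ _ _ hw' hq
          rw [h] at hlt
          exact lt_irrefl _ hlt
        rw [hrest, add_zero]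
      · rw [gvec_cons, if_neg, zero_add]
        · exact ih _ _ hw' p hp' hin
        · intro h
          have h' : tgt f = tgt p.1 := h
          have hlt := walk_pair_lt hρ _ _ _ hw' hp'
          rw [← h'] at hlt
          exact lt_irrefl _ hlt

end helpers
section helpers3

variable {V E : Type} [DecidableEq V] {src tgt : E → V} {ℓ : E → ℕ} {ρ : V → ℕ}

lemma gEntry_eq {p : E × E} (h1 : ℓ p.1 = 1 ∨ ℓ p.1 = 2) (h2 : ℓ p.2 = 1 ∨ ℓ p.2 = 2) :
    gEntry ℓ p = (ℓ p.1 : ℝ) - (ℓ p.2 : ℝ) := by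
  rcases h1 with h1 | h1 <;> rcases h2 with h2 | h2 <;> norm_num [gEntry, h1, h2]

lemma list_three {α : Type*} (l : List α) (h : 3 ≤ l.length) :
    ∃ a b c r, l = a :: b :: c :: r := by
  rcases l with _ | ⟨a, _ | ⟨b, _ | ⟨c, r⟩⟩⟩
  · simp at h
  · simp at h
  · simp at h
  · exact ⟨a, b, c, r, rfl⟩

end helpers3

/-- Telescoping sum of label differences over pairs whose vertex lies in `[A, B]`. -/
def Stele {V E : Type} (tgt : E → V) (ℓ : E → ℕ) (ρ : V → ℕ) (A B : ℕ) (L : List E) : ℝ :=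
  ((L.zip L.tail).map (fun p =>
    if A ≤ ρ (tgt p.1) ∧ ρ (tgt p.1) ≤ B then ((ℓ p.1 : ℝ) - (ℓ p.2 : ℝ)) else 0)).sum

section tele

variable {V E : Type} [DecidableEq V] {src tgt : E → V} {ℓ : E → ℕ} {ρ : V → ℕ}

lemma Stele_single (A B : ℕ) (e : E) : Stele tgt ℓ ρ A B [e] = 0 := by
  simp [Stele]

lemma Stele_cons (A B : ℕ) (e f : E) (L : List E) :
    Stele tgt ℓ ρ A B (e :: f :: L)
      = (if A ≤ ρ (tgt e) ∧ ρ (tgt e) ≤ B then ((ℓ e : ℝ) - (ℓ f : ℝ)) else 0)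
        + Stele tgt ℓ ρ A B (f :: L) := by
  simp [Stele]

lemma tele_bound (hρ : ∀ e, ρ (src e) < ρ (tgt e)) (hlabels : ∀ e, ℓ e = 1 ∨ ℓ e = 2)
    (A B : ℕ) :
    ∀ (L : List E) (e : E) (b : V), IsWalkFrom src tgt (e :: L) (src e) b →
      (B < ρ (tgt e) → Stele tgt ℓ ρ A B (e :: L) = 0) ∧
      ((A ≤ ρ (tgt e) ∧ ρ (tgt e) ≤ B) →
        ∃ c : ℕ, (c = 1 ∨ c = 2) ∧ Stele tgt ℓ ρ A B (e :: L) = (ℓ e : ℝ) - (c : ℝ)) ∧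
      (ρ (tgt e) < A → |Stele tgt ℓ ρ A B (e :: L)| ≤ 1) := by
  intro L
  induction L with
  | nil =>
    intro e b _
    refine ⟨fun _ => Stele_single A B e, fun _ => ⟨ℓ e, hlabels e, by rw [Stele_single]; ring⟩,
      fun _ => by rw [Stele_single]; norm_num⟩
  | cons f L ih =>
    intro e b hw
    have hw2 : src e = src e ∧ IsWalkFrom src tgt (f :: L) (tgt e) b := hw
    have hw3 : src f = tgt e ∧ IsWalkFrom src tgt L (tgt f) b := hw2.2
    have hwf : IsWalkFrom src tgt (f :: L) (src f) b := by rw [hw3.1]; exact hw2.2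
    have hstep : ρ (tgt e) < ρ (tgt f) := by
      have := hρ f; rwa [hw3.1] at this
    obtain ⟨ihB, ihM, ihA⟩ := ih f b hwf
    refine ⟨?_, ?_, ?_⟩
    · intro hB
      rw [Stele_cons, if_neg (fun h => absurd h.2 (not_le.mpr hB)),
        ihB (lt_trans hB hstep), add_zero]
    · intro hM
      rw [Stele_cons, if_pos hM]
      rcases le_or_gt (ρ (tgt f)) B with hfB | hfB
      · obtain ⟨c, hc, hS⟩ := ihM ⟨le_of_lt (lt_of_le_of_lt hM.1 hstep), hfB⟩
        exact ⟨c, hc, by rw [hS]; ring⟩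
      · exact ⟨ℓ f, hlabels f, by rw [ihB hfB]; ring⟩
    · intro hA
      rw [Stele_cons, if_neg (fun h => absurd h.1 (not_le.mpr hA)), zero_add]
      rcases lt_or_ge (ρ (tgt f)) A with hfA | hfA
      · exact ihA hfA
      · rcases le_or_gt (ρ (tgt f)) B with hfB | hfB
        · obtain ⟨c, hc, hS⟩ := ihM ⟨hfA, hfB⟩
          rw [hS]
          rcases hlabels f with h | h <;> rcases hc with h' | h' <;>
            rw [h, h'] <;> norm_num
        · rw [ihB hfB]; norm_num

lemma tele_abs (hρ : ∀ e, ρ (src e) < ρ (tgt e)) (hlabels : ∀ e, ℓ e = 1 ∨ ℓ e = 2)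
    (A B : ℕ) (L : List E) (a b : V) (hw : IsWalkFrom src tgt L a b) :
    |Stele tgt ℓ ρ A B L| ≤ 1 := by
  cases L with
  | nil => simp [Stele]
  | cons e L =>
    have hw2 : src e = a ∧ IsWalkFrom src tgt L (tgt e) b := hw
    have hw' : IsWalkFrom src tgt (e :: L) (src e) b := by
      exact ⟨rfl, hw2.2⟩
    obtain ⟨hB, hM, hA⟩ := tele_bound hρ hlabels A B L e b hw'
    rcases lt_or_ge B (ρ (tgt e)) with h | h
    · rw [hB h]; norm_num
    · rcases lt_or_ge (ρ (tgt e)) A with h' | h'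
      · exact hA h'
      · obtain ⟨c, hc, hS⟩ := hM ⟨h', h⟩
        rw [hS]
        rcases hlabels e with h1 | h1 <;> rcases hc with h2 | h2 <;>
          rw [h1, h2] <;> norm_num

lemma sum_ite_val (T : Finset {v : V // InnerVtx src tgt v}) (x : V) (c : ℝ) :
    (∑ u ∈ T, if x = u.1 then c else 0) = if x ∈ T.image (fun u => u.1) then c else 0 := by
  by_cases hx : x ∈ T.image (fun u => u.1)
  · obtain ⟨u0, hu0, hxu⟩ := Finset.mem_image.mp hx
    rw [if_pos hx, Finset.sum_eq_single u0]
    · rw [if_pos hxu.symm]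
    · intro u hu hne
      rw [if_neg]
      intro hxx
      exact hne (Subtype.ext (hxx.symm.trans hxu.symm))
    · intro h; exact absurd hu0 h
  · rw [if_neg hx, Finset.sum_eq_zero]
    intro u hu
    rw [if_neg]
    intro hxx
    exact hx (Finset.mem_image.mpr ⟨u, hu, hxx.symm⟩)

lemma sum_subtype_gvec (T : Finset {v : V // InnerVtx src tgt v}) :
    ∀ (Z : List (E × E)),
      (∑ u ∈ T, (Z.map (fun p => if tgt p.1 = u.1 then gEntry ℓ p else 0)).sum)
        = (Z.map (fun p => if tgt p.1 ∈ T.image (fun u => u.1) then gEntry ℓ p else 0)).sum := by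
  intro Z
  induction Z with
  | nil => simp
  | cons p Z ih =>
    simp only [List.map_cons, List.sum_cons, Finset.sum_add_distrib, ih]
    rw [sum_ite_val]

lemma sum_gvec_eq (T : Finset {v : V // InnerVtx src tgt v}) (L : List E) :
    (∑ u ∈ T, gvec src tgt ℓ L u)
      = ((L.zip L.tail).map
          (fun p => if tgt p.1 ∈ T.image (fun u => u.1) then gEntry ℓ p else 0)).sum := by
  rw [← sum_subtype_gvec]
  rfl

end tele

/-- Let `(G, F)` be an amply framed full DAG whose g-polytope is locally
anti-blocking.  Then every route of `G` switches edge labels at most twice. -/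
theorem switches_le_two_of_gPolytope_locallyAntiBlocking {V E : Type}
    [DecidableEq V] (src tgt : E → V) (ℓ : E → ℕ)
    (hacyc : IsAcyclic src tgt)
    (hframe : AmpleFraming src tgt ℓ)
    (hample : IsAmple src tgt ℓ)
    (hlab : LocallyAntiBlocking (gPolytope src tgt ℓ)) :
    ∀ L : List E, IsRoute src tgt L → switches ℓ L ≤ 2 := by
  classical
  intro L0 hroute
  by_contra hgt
  push_neg at hgt
  obtain ⟨ρ, hρ⟩ := hacyc
  have hroute2 : L0 ≠ [] ∧ ∃ a b : V, IsWalkFrom src tgt L0 a b ∧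
      (∀ e, tgt e ≠ a) ∧ (∀ e, src e ≠ b) := hroute
  obtain ⟨hne, a0, b0, hwalk, hsrc0, hsnk0⟩ := hroute2
  -- extract three switch pairs
  have hcount : switches ℓ L0 = ((L0.zip L0.tail).filter (fun p => ℓ p.1 != ℓ p.2)).length := by
    simp [switches, List.countP_eq_length_filter]
  have h3 : 3 ≤ ((L0.zip L0.tail).filter (fun p => ℓ p.1 != ℓ p.2)).length := by omega
  obtain ⟨p0, p1, p2, rest, hF⟩ := list_three _ h3
  have hmem : ∀ p ∈ (L0.zip L0.tail).filter (fun p => ℓ p.1 != ℓ p.2),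
      p ∈ L0.zip L0.tail ∧ ℓ p.1 ≠ ℓ p.2 := by
    intro p hp
    refine ⟨List.mem_of_mem_filter hp, ?_⟩
    have := List.of_mem_filter hp
    simpa using this
  have hp0 := hmem p0 (by rw [hF]; simp)
  have hp1 := hmem p1 (by rw [hF]; simp)
  have hp2 := hmem p2 (by rw [hF]; simp)
  have hpwF : ((L0.zip L0.tail).filter (fun p => ℓ p.1 != ℓ p.2)).Pairwise
      (fun p q => ρ (tgt p.1) < ρ (tgt q.1)) :=
    List.Pairwise.sublist List.filter_sublist (walk_pairwise hρ L0 a0 b0 hwalk)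
  rw [hF, List.pairwise_cons] at hpwF
  obtain ⟨h0r, hpwF⟩ := hpwF
  rw [List.pairwise_cons] at hpwF
  obtain ⟨h1r, -⟩ := hpwF
  have rel01 : ρ (tgt p0.1) < ρ (tgt p1.1) := h0r p1 (by simp)
  have rel02 : ρ (tgt p0.1) < ρ (tgt p2.1) := h0r p2 (by simp)
  have rel12 : ρ (tgt p1.1) < ρ (tgt p2.1) := h1r p2 (by simp)
  have hval : ∀ p : E × E, ℓ p.1 ≠ ℓ p.2 → gEntry ℓ p = 1 ∨ gEntry ℓ p = -1 := by
    intro p hne'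
    rcases hframe.1 p.1 with h1 | h1 <;> rcases hframe.1 p.2 with h2 | h2
    · exact absurd (h1.trans h2.symm) hne'
    · right; norm_num [gEntry, h1, h2]
    · left; norm_num [gEntry, h1, h2]
    · exact absurd (h1.trans h2.symm) hne'
  have key : ∃ pa pb : E × E, pa ∈ L0.zip L0.tail ∧ pb ∈ L0.zip L0.tail ∧
      ρ (tgt pa.1) < ρ (tgt pb.1) ∧ gEntry ℓ pb = gEntry ℓ pa ∧
      (gEntry ℓ pa = 1 ∨ gEntry ℓ pa = -1) := by
    by_cases h01 : gEntry ℓ p0 = gEntry ℓ p1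
    · exact ⟨p0, p1, hp0.1, hp1.1, rel01, h01.symm, hval p0 hp0.2⟩
    · by_cases h02 : gEntry ℓ p0 = gEntry ℓ p2
      · exact ⟨p0, p2, hp0.1, hp2.1, rel02, h02.symm, hval p0 hp0.2⟩
      · refine ⟨p1, p2, hp1.1, hp2.1, rel12, ?_, hval p1 hp1.2⟩
        rcases hval p0 hp0.2 with h | h <;> rcases hval p1 hp1.2 with h' | h' <;>
          rcases hval p2 hp2.2 with h'' | h'' <;> simp_all
  obtain ⟨pa, pb, hpaZ, hpbZ, hlt, hsame, hs⟩ := key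
  set s := gEntry ℓ pa with hsdef
  have hadja : src pa.2 = tgt pa.1 := walk_adj L0 a0 b0 hwalk pa hpaZ
  have hadjb : src pb.2 = tgt pb.1 := walk_adj L0 a0 b0 hwalk pb hpbZ
  have hia : InnerVtx src tgt (tgt pa.1) := ⟨⟨pa.1, rfl⟩, ⟨pa.2, hadja⟩⟩
  have hib : InnerVtx src tgt (tgt pb.1) := ⟨⟨pb.1, rfl⟩, ⟨pb.2, hadjb⟩⟩
  set w1 : {v : V // InnerVtx src tgt v} := ⟨tgt pa.1, hia⟩ with hw1def
  set w3 : {v : V // InnerVtx src tgt v} := ⟨tgt pb.1, hib⟩ with hw3def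
  have hw13 : w1 ≠ w3 := by
    intro h
    have h' : tgt pa.1 = tgt pb.1 := congrArg Subtype.val h
    rw [h'] at hlt
    exact lt_irrefl _ hlt
  set x := gvec src tgt ℓ L0 with hxdef
  have hx1 : x w1 = s := by
    rw [hxdef, hw1def, hsdef]; exact gvec_pair hρ L0 a0 b0 hwalk pa hpaZ hia
  have hx3 : x w3 = s := by
    rw [hxdef, hw3def, hsdef]
    exact (gvec_pair hρ L0 a0 b0 hwalk pb hpbZ hib).trans hsame
  have hxP : x ∈ gPolytope src tgt ℓ := subset_convexHull ℝ _ ⟨L0, hroute, hxdef⟩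
  set σ : {v : V // InnerVtx src tgt v} → ℝ := fun u => if x u < 0 then -1 else 1 with hσdef
  have hσpm : ∀ u, σ u = 1 ∨ σ u = -1 := by
    intro u; by_cases h : x u < 0 <;> simp [hσdef, h]
  have hσx : ∀ u, 0 ≤ σ u * x u := by
    intro u
    by_cases h : x u < 0
    · simp only [hσdef]; rw [if_pos h]; nlinarith
    · simp only [hσdef]; rw [if_neg h]; push_neg at h; linarith
  have hσ1 : σ w1 = s := by
    rcases hs with h | h <;> simp [hσdef, hx1, h] <;> norm_num
  have hσ3 : σ w3 = s := by
    rcases hs with h | h <;> simp [hσdef, hx3, h] <;> norm_num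
  have hσw1x : σ w1 * x w1 = 1 := by
    rw [hx1, hσ1]; rcases hs with h | h <;> rw [h] <;> norm_num
  have hσw3x : σ w3 * x w3 = 1 := by
    rw [hx3, hσ3]; rcases hs with h | h <;> rw [h] <;> norm_num
  set y : {v : V // InnerVtx src tgt v} → ℝ :=
    fun u => if u = w1 ∨ u = w3 then (1 : ℝ) else 0 with hydef
  have hy : ∀ u, 0 ≤ y u ∧ y u ≤ σ u * x u := by
    intro u
    by_cases h : u = w1 ∨ u = w3
    · have hyu : y u = 1 := by simp [hydef, h]
      rcases h with rfl | rfl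
      · exact ⟨by rw [hyu]; norm_num, by rw [hyu, hσw1x]⟩
      · exact ⟨by rw [hyu]; norm_num, by rw [hyu, hσw3x]⟩
    · have hyu : y u = 0 := by simp [hydef, h]
      exact ⟨le_of_eq hyu.symm, hyu ▸ hσx u⟩
  have hmemQ : (fun u => σ u * x u) ∈
      ((fun x i => σ i * x i) '' gPolytope src tgt ℓ) ∩ {x | ∀ i, 0 ≤ x i} :=
    ⟨⟨x, hxP, rfl⟩, hσx⟩
  have hyQ := hlab σ hσpm _ hmemQ y hy
  obtain ⟨⟨q, hqP, hqy⟩, -⟩ := hyQ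
  have hq : ∀ u, q u = (if u = w1 ∨ u = w3 then s else 0) := by
    intro u
    have h1 : σ u * q u = y u := congrFun hqy u
    have hσ2 : σ u * σ u = 1 := by rcases hσpm u with h | h <;> rw [h] <;> norm_num
    have hqu : q u = σ u * y u := by
      calc q u = (σ u * σ u) * q u := by rw [hσ2, one_mul]
        _ = σ u * (σ u * q u) := by ring
        _ = σ u * y u := by rw [h1]
    by_cases h : u = w1 ∨ u = w3
    · rw [if_pos h, hqu]
      have hyu : y u = 1 := by simp [hydef, h]
      rw [hyu, mul_one]
      rcases h with rfl | rfl
      · exact hσ1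
      · exact hσ3
    · rw [if_neg h, hqu]
      have hyu : y u = 0 := by simp [hydef, h]
      rw [hyu, mul_zero]
  have hqP' : q ∈ convexHull ℝ {x : {v : V // InnerVtx src tgt v} → ℝ |
      ∃ L : List E, IsRoute src tgt L ∧ x = gvec src tgt ℓ L} := hqP
  rw [convexHull_eq] at hqP'
  obtain ⟨ι, t, wgt, zf, hw0, hwsum, hzD, hcm⟩ := hqP'
  have hq_eq : q = ∑ i ∈ t, wgt i • zf i := by
    rw [← hcm, Finset.centerMass_eq_of_sum_1 _ _ hwsum]
  set A := ρ (tgt pa.1) with hA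
  set B := ρ (tgt pb.1) with hB
  set Tim : Finset V := insert (tgt pa.1) (insert (tgt pb.1)
      (t.biUnion (fun i =>
        if h : ∃ L : List E, IsRoute src tgt L ∧ zf i = gvec src tgt ℓ L then
          (((h.choose).zip (h.choose).tail).map (fun p => tgt p.1)).toFinset.filter
            (fun v => A ≤ ρ v ∧ ρ v ≤ B)
        else ∅))) with hTim
  have hTint : ∀ v ∈ Tim, A ≤ ρ v ∧ ρ v ≤ B := by
    intro v hv
    rw [hTim] at hv
    rcases Finset.mem_insert.mp hv with rfl | hv
    · omega
    rcases Finset.mem_insert.mp hv with rfl | hv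
    · omega
    obtain ⟨i, hi, hvF⟩ := Finset.mem_biUnion.mp hv
    by_cases hPi : ∃ L : List E, IsRoute src tgt L ∧ zf i = gvec src tgt ℓ L
    · rw [dif_pos hPi] at hvF
      exact (Finset.mem_filter.mp hvF).2
    · rw [dif_neg hPi] at hvF
      simp at hvF
  set Tsub : Finset {v : V // InnerVtx src tgt v} :=
    Tim.subtype (InnerVtx src tgt) with hTsub
  have hw1T : w1 ∈ Tsub := by
    rw [hTsub]
    refine Finset.mem_subtype.mpr ?_
    rw [hTim]
    exact Finset.mem_insert_self _ _
  have hw3T : w3 ∈ Tsub := by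
    rw [hTsub]
    refine Finset.mem_subtype.mpr ?_
    rw [hTim]
    exact Finset.mem_insert.mpr (Or.inr (Finset.mem_insert_self _ _))
  have hbound : ∀ i ∈ t, |∑ u ∈ Tsub, zf i u| ≤ 1 := by
    intro i hi
    have hPi : ∃ L : List E, IsRoute src tgt L ∧ zf i = gvec src tgt ℓ L := hzD i hi
    obtain ⟨hRi, hzi⟩ := hPi.choose_spec
    have hRi2 : hPi.choose ≠ [] ∧ ∃ a b : V, IsWalkFrom src tgt hPi.choose a b ∧
        (∀ e, tgt e ≠ a) ∧ (∀ e, src e ≠ b) := hRi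
    obtain ⟨-, aI, bI, hwI, -, -⟩ := hRi2
    rw [hzi, sum_gvec_eq]
    have hcg : ∀ p ∈ (hPi.choose).zip (hPi.choose).tail,
        (if tgt p.1 ∈ Tsub.image (fun u => u.1) then gEntry ℓ p else 0)
          = (if A ≤ ρ (tgt p.1) ∧ ρ (tgt p.1) ≤ B then ((ℓ p.1 : ℝ) - (ℓ p.2 : ℝ)) else 0) := by
      intro p hp
      have hiff : (tgt p.1 ∈ Tsub.image (fun u => u.1)) ↔
          (A ≤ ρ (tgt p.1) ∧ ρ (tgt p.1) ≤ B) := by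
        constructor
        · intro h
          obtain ⟨u, hu, hux⟩ := Finset.mem_image.mp h
          rw [hTsub] at hu
          have := hTint u.1 (Finset.mem_subtype.mp hu)
          rwa [hux] at this
        · intro h
          have hadj : src p.2 = tgt p.1 := walk_adj _ aI bI hwI p hp
          have hin : InnerVtx src tgt (tgt p.1) := ⟨⟨p.1, rfl⟩, ⟨p.2, hadj⟩⟩
          refine Finset.mem_image.mpr ⟨⟨tgt p.1, hin⟩, ?_, rfl⟩
          rw [hTsub]
          refine Finset.mem_subtype.mpr ?_
          rw [hTim]
          refine Finset.mem_insert.mpr (Or.inr (Finset.mem_insert.mpr (Or.inr ?_)))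
          refine Finset.mem_biUnion.mpr ⟨i, hi, ?_⟩
          rw [dif_pos hPi]
          exact Finset.mem_filter.mpr
            ⟨List.mem_toFinset.mpr (List.mem_map.mpr ⟨p, hp, rfl⟩), h⟩
      rw [if_congr hiff (gEntry_eq (hframe.1 _) (hframe.1 _)) rfl]
    rw [List.map_congr_left hcg]
    exact tele_abs hρ hframe.1 A B hPi.choose aI bI hwI
  have hsub : ({w1, w3} : Finset {v : V // InnerVtx src tgt v}) ⊆ Tsub := by
    intro u hu
    rcases Finset.mem_insert.mp hu with rfl | hu
    · exact hw1T
    · rw [Finset.mem_singleton] at hu; subst hu; exact hw3T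
  have hzero : ∀ u ∈ Tsub, u ∉ ({w1, w3} : Finset {v : V // InnerVtx src tgt v}) → q u = 0 := by
    intro u _ hnu
    rw [hq u, if_neg]
    intro h
    rcases h with rfl | rfl
    · exact hnu (Finset.mem_insert_self _ _)
    · exact hnu (Finset.mem_insert.mpr (Or.inr (Finset.mem_singleton_self _)))
  have hsum_q : ∑ u ∈ Tsub, q u = s + s := by
    rw [← Finset.sum_subset hsub hzero, Finset.sum_pair hw13, hq w1, hq w3,
      if_pos (Or.inl rfl), if_pos (Or.inr rfl)]
  have hlin : ∑ u ∈ Tsub, q u = ∑ i ∈ t, wgt i * (∑ u ∈ Tsub, zf i u) := by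
    rw [hq_eq]
    simp only [Finset.sum_apply, Pi.smul_apply, smul_eq_mul]
    rw [Finset.sum_comm]
    exact Finset.sum_congr rfl (fun i _ => by rw [Finset.mul_sum])
  have habs : |∑ u ∈ Tsub, q u| ≤ 1 := by
    rw [hlin]
    calc |∑ i ∈ t, wgt i * (∑ u ∈ Tsub, zf i u)|
        ≤ ∑ i ∈ t, |wgt i * (∑ u ∈ Tsub, zf i u)| := Finset.abs_sum_le_sum_abs _ _
      _ ≤ ∑ i ∈ t, wgt i := by
          refine Finset.sum_le_sum (fun i hi => ?_)
          rw [abs_mul, abs_of_nonneg (hw0 i hi)]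
          calc wgt i * |∑ u ∈ Tsub, zf i u| ≤ wgt i * 1 :=
              mul_le_mul_of_nonneg_left (hbound i hi) (hw0 i hi)
            _ = wgt i := mul_one _
      _ = 1 := hwsum
  rw [hsum_q] at habs
  rcases hs with h | h <;> rw [h] at habs <;> norm_num at habs
end

section
/- Let P ⊆ ℝ^d be a polytope with 0 in its interior, and suppose every vertex of P has at most two nonzero coordinates, and moreover for every vertex v with nonzero coordinates at positions i and j, the coordinate projections π_i(v) and π_j(v) (setting that coordinate to 0) are also points of P. Then P is locally anti-blocking. -/
open Set


/-- Zeroing one coordinate is linear. -/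
noncomputable def zeroCoord {d : ℕ} (k : Fin d) : (Fin d → ℝ) →ₗ[ℝ] (Fin d → ℝ) :=
  LinearMap.pi (fun i => if i = k then 0 else LinearMap.proj i)

lemma zeroCoord_apply {d : ℕ} (k : Fin d) (x : Fin d → ℝ) :
    zeroCoord k x = Function.update x k 0 := by
  funext i
  simp only [zeroCoord, LinearMap.pi_apply, Function.update]
  by_cases h : i = k <;> simp [h]



/-- Let `P ⊆ ℝ^d` be a polytope with `0` in its interior such that every
vertex has at most two nonzero coordinates, and for every vertex `v` with nonzero
coordinates at positions `i` and `j`, the points obtained by zeroing either coordinate also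
lie in `P`.  Then `P` is locally anti-blocking. -/
theorem locallyAntiBlocking_of_vertex_conditions {d : ℕ} (P : Set (Fin d → ℝ))
    (hP : IsPolytope P) (h0 : (0 : Fin d → ℝ) ∈ interior P)
    (hsupp : ∀ v ∈ Set.extremePoints ℝ P, Set.ncard {i | v i ≠ 0} ≤ 2)
    (hproj : ∀ v ∈ Set.extremePoints ℝ P, ∀ i j : Fin d, i ≠ j →
      v i ≠ 0 → v j ≠ 0 →
        Function.update v i 0 ∈ P ∧ Function.update v j 0 ∈ P) :
    LocallyAntiBlocking P := by
  obtain ⟨V, hV⟩ := hP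
  have h0P : (0 : Fin d → ℝ) ∈ P := interior_subset h0
  have hconv : Convex ℝ P := hV ▸ convex_convexHull ℝ _
  have hcomp : IsCompact P := hV ▸ V.finite_toSet.isCompact_convexHull ℝ
  have hEfin : (Set.extremePoints ℝ P).Finite :=
    V.finite_toSet.subset (hV ▸ extremePoints_convexHull_subset)
  have hPE : P = convexHull ℝ (Set.extremePoints ℝ P) := by
    have := closure_convexHull_extremePoints hcomp hconv
    rwa [((hEfin.isClosed_convexHull ℝ).closure_eq), eq_comm] at this
  -- Property Z: zeroing any coordinate keeps points in P
  have hZ : ∀ x ∈ P, ∀ k, Function.update x k 0 ∈ P := by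
    intro x hx k
    rw [← zeroCoord_apply]
    have hxE : x ∈ convexHull ℝ (Set.extremePoints ℝ P) := hPE ▸ hx
    have himg : zeroCoord k x ∈ convexHull ℝ (zeroCoord k '' Set.extremePoints ℝ P) := by
      rw [← (zeroCoord k).image_convexHull]
      exact Set.mem_image_of_mem _ hxE
    refine convexHull_min ?_ hconv himg
    rintro _ ⟨v, hv, rfl⟩
    rw [zeroCoord_apply]
    by_cases hvk : v k = 0
    · rw [Function.update_eq_self_iff.2 hvk.symm]
      exact hv.1
    · by_cases hall : ∀ j, j ≠ k → v j = 0
      · have : Function.update v k 0 = 0 := by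
          funext j
          by_cases hj : j = k
          · subst hj; simp
          · simp [Function.update, hj, hall j hj]
        rw [this]; exact h0P
      · push_neg at hall
        obtain ⟨j, hjk, hvj⟩ := hall
        exact (hproj v hv k j (fun h => hjk h.symm) hvk hvj).1
  -- Shrinking lemma
  have hshrink : ∀ p ∈ P, ∀ t : Fin d → ℝ, (∀ i, 0 ≤ t i ∧ t i ≤ 1) →
      (fun i => t i * p i) ∈ P := by
    intro p hp t ht
    have key : ∀ s : Finset (Fin d), (fun i => if i ∈ s then t i * p i else p i) ∈ P := by
      intro s
      induction s using Finset.induction_on with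
      | empty => simpa using hp
      | @insert i s his ih =>
        set w : Fin d → ℝ := fun j => if j ∈ s then t j * p j else p j with hw
        have hwP : w ∈ P := ih
        have hwP0 : Function.update w i 0 ∈ P := hZ w hwP i
        have : (fun j => if j ∈ insert i s then t j * p j else p j)
            = t i • w + (1 - t i) • Function.update w i 0 := by
          funext j
          by_cases hj : j = i
          · subst hj
            simp [hw, his, Function.update_self, mul_comm]
          · simp only [Finset.mem_insert, hj, false_or, Pi.add_apply, Pi.smul_apply,
              Function.update, dif_neg hj, smul_eq_mul, hw]
            by_cases hjs : j ∈ s <;> simp [hjs] <;> ring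
        rw [this]
        exact hconv hwP hwP0 (ht i).1 (by linarith [(ht i).2]) (by ring)
    have := key Finset.univ
    simpa using this
  -- Main goal
  intro σ hσ x hx y hy
  obtain ⟨⟨p, hpP, hpx⟩, _⟩ := hx
  have hσsq : ∀ i, σ i * σ i = 1 := fun i => by rcases hσ i with h | h <;> rw [h] <;> norm_num
  set t : Fin d → ℝ := fun i => if p i = 0 then 0 else y i / (σ i * p i) with hts
  have hxi : ∀ i, x i = σ i * p i := fun i => by rw [← hpx]
  have htb : ∀ i, 0 ≤ t i ∧ t i ≤ 1 := by
    intro i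
    by_cases hpi : p i = 0
    · simp [hts, hpi]
    · have hxipos : 0 < x i := by
        rcases lt_or_eq_of_le ((hy i).1.trans (hy i).2) with h | h
        · exact h
        · exfalso; apply hpi
          have : σ i * p i = 0 := by rw [← hxi i, ← h]
          rcases hσ i with hs | hs <;> rw [hs] at this <;> linarith
      constructor
      · simp only [hts, if_neg hpi, ← hxi i]
        exact div_nonneg (hy i).1 hxipos.le
      · simp only [hts, if_neg hpi, ← hxi i]
        exact div_le_one_of_le₀ (hy i).2 hxipos.le
  have hzP : (fun i => t i * p i) ∈ P := hshrink p hpP t htb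
  constructor
  · refine ⟨_, hzP, ?_⟩
    funext i
    by_cases hpi : p i = 0
    · simp only [hts, if_pos hpi, hpi, mul_zero]
      have : x i = 0 := by rw [hxi i, hpi, mul_zero]
      have := (hy i).2
      have := (hy i).1
      linarith [(hy i).1, (hy i).2, this]
    · simp only [hts, if_neg hpi]
      have hσp : σ i * p i ≠ 0 := by
        rcases hσ i with hs | hs <;> rw [hs] <;> simpa using hpi
      have hσ0 : σ i ≠ 0 := left_ne_zero_of_mul hσp
      field_simp
  · intro i; exact (hy i).1
end
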